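/- arXiv:2005.12233 — 5 statements merged into one kernel-verified Lean document; each statement's English description precedes it below -/
import Mathlib

section
/- Let α ∈ (0, d) and let E ⊂ ℝ^d be the fractal lattice set E = ∩_i E_i, where for a rapidly increasing sequence of integers q_i, E_i is the union over u ∈ {0,1,…,q_i}^d of the open balls of radius q_i^{−d/α} centered at u/q_i. Then E is not Ahlfors–David regular: there is no Borel probability measure μ on E and constants 0 < c < C with c·r^α ≤ μ(B(x,r)) ≤ C·r^α for all x ∈ E and r ∈ (0, diam E). -/
open MeasureTheory ENNReal

/-- The fractal lattice set `E = ∩_i E_i`, where `E_i` is the union over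
`u ∈ {0,1,…,q_i}^d` of the open balls of radius `q_i^{-d/α}` centered at `u/q_i`. -/
noncomputable def latticeSet (d : ℕ) (α : ℝ) (q : ℕ → ℕ) : Set (EuclideanSpace ℝ (Fin d)) :=
  ⋂ i, ⋃ u ∈ {u : Fin d → ℕ | ∀ j, u j ≤ q i},
    Metric.ball ((WithLp.equiv 2 (Fin d → ℝ)).symm (fun j => (u j : ℝ) / (q i : ℝ)))
      ((q i : ℝ) ^ (-(d : ℝ) / α))

lemma coord_abs {d : ℕ} (x : EuclideanSpace ℝ (Fin d)) (j : Fin d) : |x j| ≤ ‖x‖ := by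
  rw [EuclideanSpace.norm_eq]
  have h : |x j| = Real.sqrt (‖x j‖ ^ 2) := by
    rw [Real.norm_eq_abs, sq_abs, Real.sqrt_sq_eq_abs]
  rw [h]
  exact Real.sqrt_le_sqrt (Finset.single_le_sum (f := fun i => ‖x i‖ ^ 2)
    (fun i _ => sq_nonneg _) (Finset.mem_univ j))

lemma mem_latticeSet_iff {d : ℕ} {α : ℝ} {q : ℕ → ℕ} {x : EuclideanSpace ℝ (Fin d)} :
    x ∈ latticeSet d α q ↔ ∀ i, ∃ u : Fin d → ℕ, (∀ j, u j ≤ q i) ∧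
      dist x ((WithLp.equiv 2 (Fin d → ℝ)).symm (fun j => (u j : ℝ) / (q i : ℝ)))
        < (q i : ℝ) ^ (-(d : ℝ) / α) := by
  simp [latticeSet, Set.mem_iInter, Set.mem_iUnion, Metric.mem_ball, dist_comm]

/-- The fractal lattice set of dimension `α < d` is not Ahlfors–David regular: it supports
no Borel probability measure `μ` with `c·r^α ≤ μ(B(x,r)) ≤ C·r^α` for all `x ∈ E` and
`0 < r < diam E`. -/
theorem stmt_5 (d : ℕ) (hd : 1 ≤ d) (α : ℝ) (hα : 0 < α) (hαd : α < d)
    (q : ℕ → ℕ) (hq : ∀ i, 2 ≤ q i) (hgrow : ∀ i, 1 ≤ i → q (i + 1) = q i ^ i) :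
    ¬ ∃ (μ : Measure (EuclideanSpace ℝ (Fin d))) (c C : ℝ), 0 < c ∧ c < C ∧
      IsProbabilityMeasure μ ∧ μ (latticeSet d α q)ᶜ = 0 ∧
      ∀ x ∈ latticeSet d α q, ∀ r : ℝ, 0 < r → r < Metric.diam (latticeSet d α q) →
        ENNReal.ofReal (c * r ^ α) ≤ μ (Metric.ball x r) ∧
        μ (Metric.ball x r) ≤ ENNReal.ofReal (C * r ^ α) := by
  rintro ⟨μ, c, C, hc, hcC, hprob, hnull, hAD⟩
  set E := latticeSet d α q with hE
  set R : ℕ → ℝ := fun i => (q i : ℝ) ^ (-(d : ℝ) / α) with hRdef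
  have hC : 0 < C := hc.trans hcC
  have hd' : (1 : ℝ) ≤ d := by exact_mod_cast hd
  have hq1 : ∀ i, (1 : ℝ) < (q i : ℝ) := fun i => by exact_mod_cast (hq i).trans_lt' one_lt_two
  have hq0 : ∀ i, (0 : ℝ) < (q i : ℝ) := fun i => lt_trans one_pos (hq1 i)
  have hexp : -(d : ℝ) / α < -1 := by
    rw [div_lt_iff₀ hα, neg_mul, neg_lt_neg_iff]
    linarith
  have hRpos : ∀ i, 0 < R i := fun i => Real.rpow_pos_of_pos (hq0 i) _
  have hRlt : ∀ i, R i < 1 / 2 := by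
    intro i
    have h1 : R i < (q i : ℝ) ^ (-1 : ℝ) :=
      Real.rpow_lt_rpow_of_exponent_lt (hq1 i) hexp
    have h2 : (q i : ℝ) ^ (-1 : ℝ) = ((q i : ℝ))⁻¹ := by
      rw [Real.rpow_neg_one]
    have h3 : ((q i : ℝ))⁻¹ ≤ 1 / 2 := by
      rw [one_div]
      exact inv_anti₀ two_pos (by exact_mod_cast hq i)
    linarith
  -- 0 and the all-ones point are in E
  have zero_mem : (0 : EuclideanSpace ℝ (Fin d)) ∈ E := by
    rw [hE, mem_latticeSet_iff]
    intro i
    refine ⟨fun _ => 0, fun j => Nat.zero_le _, ?_⟩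
    have h0 : ((WithLp.equiv 2 (Fin d → ℝ)).symm (fun _ : Fin d => ((0 : ℕ) : ℝ) / (q i : ℝ)))
        = (0 : EuclideanSpace ℝ (Fin d)) := by
      ext j
      simp
    have hz : ((WithLp.equiv 2 (Fin d → ℝ)).symm fun _ : Fin d => (0 : ℝ))
        = (0 : EuclideanSpace ℝ (Fin d)) := rfl
    simpa [hz] using hRpos i
  have one_mem : ((WithLp.equiv 2 (Fin d → ℝ)).symm (fun _ => (1 : ℝ))) ∈ E := by
    rw [hE, mem_latticeSet_iff]
    intro i
    refine ⟨fun _ => q i, fun j => le_refl _, ?_⟩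
    have h1 : ((WithLp.equiv 2 (Fin d → ℝ)).symm (fun _ : Fin d => ((q i : ℕ) : ℝ) / (q i : ℝ)))
        = ((WithLp.equiv 2 (Fin d → ℝ)).symm (fun _ : Fin d => (1 : ℝ))) := by
      congr 1
      funext j
      rw [div_self (hq0 i).ne']
    simpa [h1] using hRpos i
  -- E is bounded and has diameter at least 1
  have hnorm_le : ∀ u : Fin d → ℕ, (∀ j, u j ≤ q 0) →
      ‖((WithLp.equiv 2 (Fin d → ℝ)).symm (fun j => (u j : ℝ) / (q 0 : ℝ)) :
        EuclideanSpace ℝ (Fin d))‖ ≤ d := by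
    intro u hu
    rw [EuclideanSpace.norm_eq]
    have hsum : ∑ j : Fin d, ‖((WithLp.equiv 2 (Fin d → ℝ)).symm
        (fun j => (u j : ℝ) / (q 0 : ℝ)) : EuclideanSpace ℝ (Fin d)) j‖ ^ 2 ≤ (d : ℝ) := by
      have : ∀ j : Fin d, ‖((WithLp.equiv 2 (Fin d → ℝ)).symm
          (fun j => (u j : ℝ) / (q 0 : ℝ)) : EuclideanSpace ℝ (Fin d)) j‖ ^ 2 ≤ 1 := by
        intro j
        have h1 : ((WithLp.equiv 2 (Fin d → ℝ)).symm
            (fun j => (u j : ℝ) / (q 0 : ℝ)) : EuclideanSpace ℝ (Fin d)) j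
            = (u j : ℝ) / (q 0 : ℝ) := rfl
        rw [h1, Real.norm_eq_abs, sq_abs]
        have h2 : (0 : ℝ) ≤ (u j : ℝ) / (q 0 : ℝ) := by positivity
        have h3 : (u j : ℝ) / (q 0 : ℝ) ≤ 1 := by
          rw [div_le_one (hq0 0)]
          exact_mod_cast hu j
        nlinarith
      calc ∑ j : Fin d, _ ≤ ∑ _j : Fin d, (1 : ℝ) := Finset.sum_le_sum fun j _ => this j
        _ = d := by simp
    calc Real.sqrt _ ≤ Real.sqrt (d : ℝ) := Real.sqrt_le_sqrt hsum
      _ ≤ Real.sqrt ((d : ℝ) ^ 2) := Real.sqrt_le_sqrt (by nlinarith [hd'])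
      _ = d := Real.sqrt_sq (by positivity)
  have hbound : Bornology.IsBounded E := by
    apply (Metric.isBounded_closedBall (x := (0 : EuclideanSpace ℝ (Fin d)))
      (r := (d : ℝ) + 1)).subset
    intro x hx
    obtain ⟨u, hu, hdist⟩ := mem_latticeSet_iff.mp hx 0
    rw [Metric.mem_closedBall]
    calc dist x 0 ≤ dist x ((WithLp.equiv 2 (Fin d → ℝ)).symm
            (fun j => (u j : ℝ) / (q 0 : ℝ)))
          + dist ((WithLp.equiv 2 (Fin d → ℝ)).symm
            (fun j => (u j : ℝ) / (q 0 : ℝ))) 0 := dist_triangle _ _ _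
      _ ≤ R 0 + d := by
          have h1 := hnorm_le u hu
          rw [dist_zero_right]
          have := le_of_lt hdist
          exact add_le_add this h1
      _ ≤ d + 1 := by linarith [hRlt 0]
  have hdiam : 1 ≤ Metric.diam E := by
    have h1 : (1 : ℝ) ≤ dist (0 : EuclideanSpace ℝ (Fin d))
        ((WithLp.equiv 2 (Fin d → ℝ)).symm (fun _ => (1 : ℝ))) := by
      rw [dist_zero_left, EuclideanSpace.norm_eq]
      have : ∑ j : Fin d, ‖((WithLp.equiv 2 (Fin d → ℝ)).symm
          (fun _ : Fin d => (1 : ℝ)) : EuclideanSpace ℝ (Fin d)) j‖ ^ 2 = (d : ℝ) := by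
        simp [show ∀ j : Fin d, ((WithLp.equiv 2 (Fin d → ℝ)).symm
          (fun _ : Fin d => (1 : ℝ)) : EuclideanSpace ℝ (Fin d)) j = 1 from fun _ => rfl]
      rw [this]
      rw [show (1 : ℝ) = Real.sqrt 1 by simp]
      exact Real.sqrt_le_sqrt hd'
    exact h1.trans (Metric.dist_le_diam_of_mem hbound zero_mem one_mem)
  -- choose a suitable index
  have hRle : ∀ i, 1 ≤ i → R (i + 1) ≤ R i := by
    intro i hi
    have hle : (q i : ℝ) ≤ q (i + 1) := by
      rw [hgrow i hi]
      exact_mod_cast Nat.le_self_pow (by omega) (q i)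
    have h1 : -(d : ℝ) / α = -((d : ℝ) / α) := by ring
    rw [hRdef]
    simp only
    rw [h1, Real.rpow_neg (hq0 (i+1)).le, Real.rpow_neg (hq0 i).le]
    apply inv_anti₀ (Real.rpow_pos_of_pos (hq0 i) _)
    exact Real.rpow_le_rpow (hq0 i).le hle (by positivity)
  -- main estimate
  have key : ∀ i : ℕ, 1 ≤ i → (d : ℝ) / α ≤ i →
      c ≤ C * 2 ^ α * 3 ^ d * (q i : ℝ) ^ (-((d : ℝ) ^ 2 / α - d)) := by
    intro i hi1 hiα
    set Q : ℝ := (q i : ℝ) with hQdef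
    set Q' : ℝ := (q (i+1) : ℝ) with hQ'def
    have hQpos : (0 : ℝ) < Q := hq0 i
    have hQ'pos : (0 : ℝ) < Q' := hq0 (i+1)
    have hQ1 : (1 : ℝ) < Q := hq1 i
    have hRi : R i = Q ^ (-(d : ℝ) / α) := rfl
    have hRi' : R (i+1) = Q' ^ (-(d : ℝ) / α) := rfl
    have hQ'eq : Q' = Q ^ (i : ℝ) := by
      rw [hQ'def, hgrow i hi1]
      push_cast
      exact (Real.rpow_natCast Q i).symm
    set m := Nat.floor (Q' * (2 * R i)) with hmdef
    set pt : (Fin d → ℕ) → EuclideanSpace ℝ (Fin d) :=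
      fun v => (WithLp.equiv 2 (Fin d → ℝ)).symm (fun j => (v j : ℝ) / Q') with hptdef
    set S : Finset (Fin d → ℕ) := Fintype.piFinset (fun _ => Finset.range (m+1)) with hSdef
    -- covering of the small ball around 0 by next-scale balls
    have hcover : Metric.ball (0 : EuclideanSpace ℝ (Fin d)) (R i) ∩ E ⊆
        ⋃ v ∈ S, Metric.ball (pt v) (R (i+1)) := by
      rintro y ⟨hyb, hyE⟩
      obtain ⟨v, hv, hvd⟩ := mem_latticeSet_iff.mp hyE (i+1)
      have hvd' : dist y (pt v) < R (i+1) := hvd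
      have hy0 : dist y 0 < R i := Metric.mem_ball.mp hyb
      have hvS : v ∈ S := by
        rw [hSdef, Fintype.mem_piFinset]
        intro j
        rw [Finset.mem_range, Nat.lt_succ_iff]
        apply Nat.le_floor
        have hco : pt v j = (v j : ℝ) / Q' := rfl
        have h2 : |pt v j - y j| ≤ dist (pt v) y := by
          have h := coord_abs (pt v - y) j
          have hsub : (pt v - y) j = pt v j - y j := rfl
          rw [hsub] at h
          rwa [dist_eq_norm]
        have h3 : |y j| ≤ dist y 0 := by
          have h := coord_abs y j
          rwa [dist_zero_right]
        have h4 : |pt v j| ≤ |pt v j - y j| + |y j| := by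
          calc |pt v j| = |pt v j - y j + y j| := by ring_nf
            _ ≤ _ := abs_add_le _ _
        have h5 : (v j : ℝ) / Q' ≤ |pt v j| := by
          rw [hco]
          exact le_abs_self _
        have h6 : dist (pt v) y < R (i+1) := by rw [dist_comm]; exact hvd'
        have h7 : (v j : ℝ) / Q' < 2 * R i := by
          have := hRle i hi1
          calc (v j : ℝ) / Q' ≤ |pt v j| := h5
            _ ≤ |pt v j - y j| + |y j| := h4
            _ ≤ dist (pt v) y + dist y 0 := add_le_add h2 h3
            _ < R (i+1) + R i := add_lt_add h6 hy0
            _ ≤ 2 * R i := by linarith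
        rw [div_lt_iff₀ hQ'pos] at h7
        nlinarith
      exact Set.mem_biUnion hvS (Metric.mem_ball.mpr hvd')
    -- each next-scale ball has small measure
    have hball : ∀ v : Fin d → ℕ,
        μ (Metric.ball (pt v) (R (i+1))) ≤ ENNReal.ofReal (C * (2 * R (i+1)) ^ α) := by
      intro v
      by_cases hne : (Metric.ball (pt v) (R (i+1)) ∩ E).Nonempty
      · obtain ⟨y, hyb, hyE⟩ := hne
        have hsub : Metric.ball (pt v) (R (i+1)) ⊆ Metric.ball y (2 * R (i+1)) := by
          intro z hz
          rw [Metric.mem_ball] at hz ⊢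
          have h1 : dist (pt v) y < R (i+1) := by
            rw [dist_comm]; exact Metric.mem_ball.mp hyb
          calc dist z y ≤ dist z (pt v) + dist (pt v) y := dist_triangle _ _ _
            _ < 2 * R (i+1) := by linarith
        refine (measure_mono hsub).trans ?_
        exact (hAD y hyE (2 * R (i+1)) (by linarith [hRpos (i+1)])
          (by linarith [hRlt (i+1)])).2
      · have hsub : Metric.ball (pt v) (R (i+1)) ⊆ Eᶜ := by
          intro z hz hzE
          exact hne ⟨z, hz, hzE⟩
        calc μ (Metric.ball (pt v) (R (i+1))) ≤ μ Eᶜ := measure_mono hsub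
          _ = 0 := hnull
          _ ≤ _ := zero_le
    have hScard : S.card = (m+1)^d := by
      simp [hSdef]
    -- the measure-theoretic chain
    have hchain : ENNReal.ofReal (c * R i ^ α) ≤
        ((m+1)^d : ℕ) • ENNReal.ofReal (C * (2 * R (i+1)) ^ α) := by
      calc ENNReal.ofReal (c * R i ^ α) ≤ μ (Metric.ball 0 (R i)) :=
            (hAD 0 zero_mem (R i) (hRpos i) (by linarith [hRlt i])).1
        _ ≤ μ ((Metric.ball (0 : EuclideanSpace ℝ (Fin d)) (R i) ∩ E) ∪ Eᶜ) := by
            apply measure_mono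
            intro z hz
            by_cases hzE : z ∈ E
            · exact Or.inl ⟨hz, hzE⟩
            · exact Or.inr hzE
        _ ≤ μ (Metric.ball (0 : EuclideanSpace ℝ (Fin d)) (R i) ∩ E) + μ Eᶜ :=
            measure_union_le _ _
        _ = μ (Metric.ball (0 : EuclideanSpace ℝ (Fin d)) (R i) ∩ E) := by
            rw [hnull, add_zero]
        _ ≤ μ (⋃ v ∈ S, Metric.ball (pt v) (R (i+1))) := measure_mono hcover
        _ ≤ ∑ v ∈ S, μ (Metric.ball (pt v) (R (i+1))) := measure_biUnion_finset_le S _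
        _ ≤ S.card • ENNReal.ofReal (C * (2 * R (i+1)) ^ α) :=
            Finset.sum_le_card_nsmul S _ _ (fun v _ => hball v)
        _ = ((m+1)^d : ℕ) • ENNReal.ofReal (C * (2 * R (i+1)) ^ α) := by rw [hScard]
    -- pass to the reals
    have hreal : c * R i ^ α ≤ (((m+1)^d : ℕ) : ℝ) * (C * (2 * R (i+1)) ^ α) := by
      have h := hchain
      rw [nsmul_eq_mul, ← ENNReal.ofReal_natCast, ← ENNReal.ofReal_mul (by positivity)] at h
      exact (ENNReal.ofReal_le_ofReal_iff (by positivity)).mp h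
    -- real arithmetic
    have hRiα : R i ^ α = Q ^ (-(d : ℝ)) := by
      rw [hRi, ← Real.rpow_mul hQpos.le]
      congr 1
      field_simp
    have hR'α : R (i+1) ^ α = Q' ^ (-(d : ℝ)) := by
      rw [hRi', ← Real.rpow_mul hQ'pos.le]
      congr 1
      field_simp
    have h2α : (2 * R (i+1)) ^ α = 2 ^ α * R (i+1) ^ α :=
      Real.mul_rpow (by norm_num) (hRpos (i+1)).le
    have hm1 : ((m : ℝ) + 1) ≤ 3 * (Q' * R i) := by
      have hfl : (m : ℝ) ≤ Q' * (2 * R i) := Nat.floor_le (by positivity)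
      have hone : 1 ≤ Q' * R i := by
        rw [hQ'eq, hRi, ← Real.rpow_add hQpos]
        calc (1 : ℝ) = Q ^ (0 : ℝ) := (Real.rpow_zero Q).symm
          _ ≤ Q ^ ((i : ℝ) + -(d : ℝ) / α) := by
              apply Real.rpow_le_rpow_of_exponent_le hQ1.le
              have : -(d : ℝ) / α = -((d : ℝ) / α) := by ring
              rw [this]
              linarith
      linarith
    have hcast : (((m+1)^d : ℕ) : ℝ) = ((m : ℝ) + 1) ^ d := by push_cast; ring
    have step1 : c * Q ^ (-(d : ℝ)) ≤
        (3 * (Q' * R i)) ^ d * (C * (2 ^ α * Q' ^ (-(d : ℝ)))) := by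
      calc c * Q ^ (-(d : ℝ)) = c * R i ^ α := by rw [hRiα]
        _ ≤ (((m+1)^d : ℕ) : ℝ) * (C * (2 * R (i+1)) ^ α) := hreal
        _ = ((m : ℝ) + 1) ^ d * (C * (2 ^ α * Q' ^ (-(d : ℝ)))) := by
            rw [hcast, h2α, hR'α]
        _ ≤ (3 * (Q' * R i)) ^ d * (C * (2 ^ α * Q' ^ (-(d : ℝ)))) := by
            apply mul_le_mul_of_nonneg_right
              (pow_le_pow_left₀ (by positivity) hm1 d) (by positivity)
    have hQ'cancel : Q' ^ (d : ℕ) * Q' ^ (-(d : ℝ)) = 1 := by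
      rw [← Real.rpow_natCast Q' d, ← Real.rpow_add hQ'pos]
      simp
    have step2 : (3 * (Q' * R i)) ^ d * (C * (2 ^ α * Q' ^ (-(d : ℝ))))
        = C * 2 ^ α * 3 ^ d * R i ^ (d : ℕ) := by
      calc (3 * (Q' * R i)) ^ d * (C * (2 ^ α * Q' ^ (-(d : ℝ))))
          = (Q' ^ (d : ℕ) * Q' ^ (-(d : ℝ))) * (C * 2 ^ α * 3 ^ d * R i ^ (d : ℕ)) := by
            rw [mul_pow, mul_pow]; ring
        _ = C * 2 ^ α * 3 ^ d * R i ^ (d : ℕ) := by rw [hQ'cancel, one_mul]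
    have step3 : R i ^ (d : ℕ) = Q ^ (-(d : ℝ) / α * d) := by
      rw [hRi, ← Real.rpow_natCast (Q ^ (-(d : ℝ) / α)) d, ← Real.rpow_mul hQpos.le]
    have h := step1.trans_eq step2
    rw [step3] at h
    have h2 := mul_le_mul_of_nonneg_right h (Real.rpow_nonneg hQpos.le ((d : ℝ)))
    have hL : c * Q ^ (-(d : ℝ)) * Q ^ ((d : ℝ)) = c := by
      rw [mul_assoc, ← Real.rpow_add hQpos]
      simp
    have hRr : C * 2 ^ α * 3 ^ d * Q ^ (-(d : ℝ) / α * d) * Q ^ ((d : ℝ))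
        = C * 2 ^ α * 3 ^ d * Q ^ (-((d : ℝ) ^ 2 / α - d)) := by
      rw [mul_assoc, ← Real.rpow_add hQpos]
      congr 2
      field_simp
      ring
    rw [hL, hRr] at h2
    exact h2
  -- choose i large and contradict
  set K := C * 2 ^ α * 3 ^ d with hKdef
  have hK0 : 0 < K := by positivity
  set ε := (d : ℝ) ^ 2 / α - d with hεdef
  have hε : 0 < ε := by
    have h : ε = (d : ℝ) * ((d : ℝ) - α) / α := by
      rw [hεdef]; field_simp
    rw [h]
    have h1 : (0 : ℝ) < (d : ℝ) - α := by linarith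
    have h2 : (0 : ℝ) < (d : ℝ) := by linarith
    positivity
  obtain ⟨T, hT⟩ : ∃ T : ℝ, ∀ t, T ≤ t → K / c < t ^ ε := by
    have h := (tendsto_rpow_atTop hε).eventually_gt_atTop (K / c)
    rw [Filter.eventually_atTop] at h
    obtain ⟨T, hT⟩ := h
    exact ⟨T, fun t ht => hT t ht⟩
  obtain ⟨n, hn⟩ := exists_nat_ge T
  set M := max n (max 1 (Nat.ceil ((d : ℝ) / α))) with hMdef
  have hM1 : 1 ≤ M := le_trans (le_max_left 1 _) (le_max_right n _)
  have hI1 : 1 ≤ M + 1 := by omega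
  have hIα : (d : ℝ) / α ≤ (M + 1 : ℕ) := by
    have h1 : Nat.ceil ((d : ℝ) / α) ≤ M := le_trans (le_max_right 1 _) (le_max_right n _)
    have h2 : ((Nat.ceil ((d : ℝ) / α) : ℕ) : ℝ) ≤ (M : ℝ) := by exact_mod_cast h1
    have h3 : ((M : ℕ) : ℝ) ≤ ((M + 1 : ℕ) : ℝ) := by push_cast; linarith
    linarith [Nat.le_ceil ((d : ℝ) / α)]
  have hqT : T ≤ (q (M + 1) : ℝ) := by
    have h1 : q (M + 1) = q M ^ M := hgrow M hM1
    have h2 : 2 ^ M ≤ q M ^ M := Nat.pow_le_pow_left (hq M) M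
    have h3 : M < 2 ^ M := Nat.lt_two_pow_self (n := M)
    have h4 : n ≤ M := le_max_left _ _
    have h5 : n ≤ q (M + 1) := by omega
    calc T ≤ (n : ℝ) := hn
      _ ≤ (q (M + 1) : ℝ) := by exact_mod_cast h5
  have hkey := key (M + 1) hI1 hIα
  have hgt : K / c < (q (M + 1) : ℝ) ^ ε := hT _ hqT
  have hQpos : (0 : ℝ) < (q (M + 1) : ℝ) := hq0 (M + 1)
  have hmul : ((q (M + 1) : ℝ)) ^ (-ε) * ((q (M + 1) : ℝ)) ^ ε = 1 := by
    rw [← Real.rpow_add hQpos]; simp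
  have hpos : 0 < ((q (M + 1) : ℝ)) ^ (-ε) := Real.rpow_pos_of_pos hQpos _
  have hKlt : K < (q (M + 1) : ℝ) ^ ε * c := (div_lt_iff₀ hc).mp hgt
  have h6 : K * ((q (M + 1) : ℝ)) ^ (-ε) <
      ((q (M + 1) : ℝ) ^ ε * c) * ((q (M + 1) : ℝ)) ^ (-ε) :=
    mul_lt_mul_of_pos_right hKlt hpos
  have h7 : ((q (M + 1) : ℝ) ^ ε * c) * ((q (M + 1) : ℝ)) ^ (-ε) = c := by
    rw [mul_comm ((q (M + 1) : ℝ) ^ ε) c, mul_assoc, mul_comm ((q (M + 1) : ℝ) ^ ε),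
      hmul, mul_one]
  linarith
end

section
/- Let α ∈ (0,d) and let E = ∩_i E_i be the fractal lattice set as above with δ_i := q_i^{−d/α}. Then for every r ≥ δ_i and every x ∈ ℝ^d, the Lebesgue measure of the δ_i-neighborhood of E intersected with B(x,r) satisfies |E_{δ_i} ∩ B(x,r)| ≲ (r/δ_i)^α δ_i^d; that is, E is {δ_i}-discrete α-regular. -/
open MeasureTheory ENNReal

lemma core_ineq (d : ℕ) (α Q r : ℝ) (hα : 0 < α) (hαd : α ≤ (d:ℝ)) (hQ : 2 ≤ Q)
    (hr : Q ^ (-(d:ℝ)/α) ≤ r) :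
    min (Q+1) (8*Q*r+1) ^ d ≤ 9^d * (r ^ α * Q^d) := by
  have hQ0 : (0:ℝ) < Q := by linarith
  have hr0 : (0:ℝ) < r := lt_of_lt_of_le (Real.rpow_pos_of_pos hQ0 _) hr
  have hQd : (0:ℝ) < Q^d := pow_pos hQ0 d
  have h1 : 1 ≤ r ^ α * Q ^ d := by
    have h2 : Q ^ (-(d:ℝ)) ≤ r ^ α := by
      have he : (-(d:ℝ)) = (-(d:ℝ)/α)*α := by field_simp
      rw [he, Real.rpow_mul hQ0.le]
      exact Real.rpow_le_rpow (Real.rpow_nonneg hQ0.le _) hr hα.le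
    have h3 : Q ^ (-(d:ℝ)) = (Q^d)⁻¹ := by
      rw [Real.rpow_neg hQ0.le, Real.rpow_natCast]
    rw [h3] at h2
    calc (1:ℝ) = (Q^d)⁻¹ * Q^d := by field_simp
    _ ≤ r^α * Q^d := mul_le_mul_of_nonneg_right h2 hQd.le
  have hm0 : (0:ℝ) ≤ min (Q+1) (8*Q*r+1) := le_min (by linarith) (by nlinarith)
  rcases le_or_gt 1 r with h | h
  · have hra : 1 ≤ r ^ α := Real.one_le_rpow h hα.le
    calc min (Q+1) (8*Q*r+1) ^ d ≤ (9*Q)^d := by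
          refine pow_le_pow_left₀ hm0 ((min_le_left _ _).trans (by linarith)) d
    _ = 9^d * Q^d := mul_pow _ _ _
    _ ≤ 9^d * (r^α * Q^d) :=
        mul_le_mul_of_nonneg_left (by nlinarith) (by positivity)
  · rcases le_or_gt (Q*r) 1 with h2 | h2
    · calc min (Q+1) (8*Q*r+1)^d ≤ (9:ℝ)^d := by
            refine pow_le_pow_left₀ hm0 ((min_le_right _ _).trans (by nlinarith)) d
      _ ≤ 9^d * (r^α*Q^d) := le_mul_of_one_le_right (by positivity) h1
    · have hmin : min (Q+1) (8*Q*r+1) ≤ 9*(Q*r) := (min_le_right _ _).trans (by nlinarith)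
      have hrd : r ^ (d:ℝ) ≤ r ^ α := Real.rpow_le_rpow_of_exponent_ge hr0 h.le hαd
      calc min (Q+1) (8*Q*r+1)^d ≤ (9*(Q*r))^d := pow_le_pow_left₀ hm0 hmin d
      _ = 9^d * Q^d * r^d := by ring
      _ = 9^d * Q^d * r^(d:ℝ) := by rw [Real.rpow_natCast]
      _ ≤ 9^d * Q^d * r^α := mul_le_mul_of_nonneg_left hrd (by positivity)
      _ = 9^d * (r^α * Q^d) := by ring

lemma coord_le (d : ℕ) (a b : EuclideanSpace ℝ (Fin d)) (j : Fin d) :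
    dist (a j) (b j) ≤ dist a b := by
  refine (dist_le_pi_dist (WithLp.equiv 2 (Fin d → ℝ) a) (WithLp.equiv 2 (Fin d → ℝ) b) j).trans ?_
  simpa using (PiLp.lipschitzWith_ofLp 2 (fun _ : Fin d => ℝ)).dist_le_mul a b

/-- The fractal lattice set is `{δ_i}`-discrete `α`-regular with `δ_i = q_i^{-d/α}`:
for every `r ≥ δ_i` and every `x`, `|E_{δ_i} ∩ B(x,r)| ≲ (r/δ_i)^α δ_i^d`. -/
theorem stmt_6 (d : ℕ) (hd : 1 ≤ d) (α : ℝ) (hα : 0 < α) (hαd : α < d)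
    (q : ℕ → ℕ) (hq : ∀ i, 2 ≤ q i) (hgrow : ∀ i, 1 ≤ i → q (i + 1) = q i ^ i) :
    ∃ K : ℝ, 0 < K ∧ ∀ (i : ℕ) (r : ℝ) (x : EuclideanSpace ℝ (Fin d)),
      (q i : ℝ) ^ (-(d : ℝ) / α) ≤ r →
      volume (Metric.cthickening ((q i : ℝ) ^ (-(d : ℝ) / α)) (latticeSet d α q) ∩
          Metric.ball x r) ≤
        ENNReal.ofReal (K * (r / ((q i : ℝ) ^ (-(d : ℝ) / α))) ^ α *
          ((q i : ℝ) ^ (-(d : ℝ) / α)) ^ (d : ℝ)) := by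
  classical
  set C : ℝ := (volume (Metric.ball (0 : EuclideanSpace ℝ (Fin d)) 1)).toReal with hCdef
  have hC0 : 0 < C :=
    ENNReal.toReal_pos (Metric.measure_ball_pos volume 0 one_pos).ne' measure_ball_lt_top.ne
  refine ⟨9^d * 3^d * C, by positivity, ?_⟩
  intro i r x hr
  have hQ2 : (2:ℝ) ≤ (q i : ℝ) := by exact_mod_cast hq i
  have hQ0 : (0:ℝ) < (q i : ℝ) := by linarith
  have hδ0 : 0 < (q i : ℝ) ^ (-(d:ℝ)/α) := Real.rpow_pos_of_pos hQ0 _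
  set δ : ℝ := (q i : ℝ) ^ (-(d:ℝ)/α) with hδdef
  have hr0 : 0 < r := lt_of_lt_of_le hδ0 hr
  set c : (Fin d → ℕ) → EuclideanSpace ℝ (Fin d) :=
    fun u => (WithLp.equiv 2 (Fin d → ℝ)).symm (fun j => (u j : ℝ) / (q i : ℝ)) with hcdef
  set T : Fin d → Finset ℕ := fun j =>
    (Finset.range (q i + 1)).filter (fun n => |(n:ℝ)/(q i : ℝ) - x j| ≤ 4*r) with hTdef
  set F : Finset (Fin d → ℕ) := Fintype.piFinset T with hFdef
  -- covering
  have hcov : Metric.cthickening δ (latticeSet d α q) ∩ Metric.ball x r ⊆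
      ⋃ u ∈ F, Metric.closedBall (c u) (3*δ) := by
    rintro y ⟨hy1, hy2⟩
    have h1 : EMetric.infEdist y (latticeSet d α q) < ENNReal.ofReal (2*δ) :=
      lt_of_le_of_lt (Metric.mem_cthickening_iff.mp hy1)
        ((ENNReal.ofReal_lt_ofReal_iff (by linarith)).mpr (by linarith))
    obtain ⟨z, hz, hyz⟩ := EMetric.infEdist_lt_iff.mp h1
    rw [edist_lt_ofReal] at hyz
    have hz' := Set.mem_iInter.mp hz i
    simp only [Set.mem_iUnion, Set.mem_setOf_eq, exists_prop] at hz'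
    obtain ⟨u, hu, hzu⟩ := hz'
    rw [Metric.mem_ball] at hzu
    have hzu' : dist z (c u) < δ := hzu
    have hyu : dist y (c u) < 3*δ :=
      (dist_triangle y z (c u)).trans_lt (by linarith)
    have hyx : dist y x < r := Metric.mem_ball.mp hy2
    have hux : dist (c u) x < 4*r := by
      have h4 := dist_triangle (c u) y x
      have h3 : dist (c u) y < 3*δ := by rw [dist_comm]; exact hyu
      have hδr3 : 3*δ ≤ 3*r := by linarith
      linarith
    have hmem : u ∈ F := by
      rw [hFdef, Fintype.mem_piFinset]
      intro j
      simp only [hTdef, Finset.mem_filter, Finset.mem_range]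
      refine ⟨Nat.lt_succ_of_le (hu j), ?_⟩
      have hcj : (c u) j = (u j : ℝ)/(q i : ℝ) := rfl
      calc |(u j:ℝ)/(q i:ℝ) - x j| = dist ((c u) j) (x j) := by rw [hcj, Real.dist_eq]
      _ ≤ dist (c u) x := coord_le d _ _ j
      _ ≤ 4*r := hux.le
    exact Set.mem_biUnion hmem (Metric.mem_closedBall.mpr hyu.le)
  -- measure of each ball
  have hvol : ∀ u : Fin d → ℕ, volume (Metric.closedBall (c u) (3*δ)) =
      ENNReal.ofReal ((3*δ)^d) * volume (Metric.ball (0 : EuclideanSpace ℝ (Fin d)) 1) := by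
    intro u
    rw [Measure.addHaar_closedBall volume (c u) (by linarith : (0:ℝ) ≤ 3*δ),
      finrank_euclideanSpace_fin]
  have hmeas : volume (Metric.cthickening δ (latticeSet d α q) ∩ Metric.ball x r) ≤
      (F.card : ℝ≥0∞) * (ENNReal.ofReal ((3*δ)^d) *
        volume (Metric.ball (0 : EuclideanSpace ℝ (Fin d)) 1)) := by
    refine (measure_mono hcov).trans ((measure_biUnion_finset_le F _).trans ?_)
    rw [Finset.sum_congr rfl (fun u _ => hvol u), Finset.sum_const, nsmul_eq_mul]
  -- cardinality bound
  have hTcard : ∀ j, (T j).card ≤ min (q i + 1) (Nat.floor (8*(q i:ℝ)*r) + 1) := by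
    intro j
    rcases Finset.eq_empty_or_nonempty (T j) with he | hne
    · rw [he]; simp
    · refine le_min ?_ ?_
      · have hsub1 : T j ⊆ Finset.range (q i + 1) := by
          intro n hn
          simp only [hTdef, Finset.mem_filter] at hn
          exact hn.1
        simpa using Finset.card_le_card hsub1
      · have hsub : T j ⊆ Finset.Icc ((T j).min' hne) ((T j).min' hne + Nat.floor (8*(q i:ℝ)*r)) := by
          intro n hn
          rw [Finset.mem_Icc]
          refine ⟨Finset.min'_le _ _ hn, ?_⟩
          have hn₀ := (T j).min'_mem hne
          set n₀ := (T j).min' hne with hn₀def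
          simp only [hTdef, Finset.mem_filter, Finset.mem_range] at hn hn₀
          have ha := abs_le.mp hn.2
          have hb := abs_le.mp hn₀.2
          have h1 : (n:ℝ) ≤ (x j + 4*r)*(q i:ℝ) :=
            (div_le_iff₀ hQ0).mp (by linarith [ha.2])
          have h2 : (x j - 4*r)*(q i:ℝ) ≤ (n₀:ℝ) :=
            (le_div_iff₀ hQ0).mp (by linarith [hb.1])
          have h3 : (n:ℝ) ≤ (n₀:ℝ) + 8*(q i:ℝ)*r := by nlinarith
          by_cases hle : n ≤ n₀
          · omega
          · push_neg at hle
            have h4 : ((n - n₀ : ℕ) : ℝ) ≤ 8*(q i:ℝ)*r := by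
              rw [Nat.cast_sub hle.le]
              push_cast
              linarith
            have h5 := Nat.le_floor h4
            omega
        calc (T j).card ≤ (Finset.Icc ((T j).min' hne) ((T j).min' hne + Nat.floor (8*(q i:ℝ)*r))).card :=
            Finset.card_le_card hsub
        _ = Nat.floor (8*(q i:ℝ)*r) + 1 := by rw [Nat.card_Icc]; omega
  have hcardR : (F.card : ℝ) ≤ min ((q i:ℝ)+1) (8*(q i:ℝ)*r+1) ^ d := by
    have h5 : F.card ≤ (min (q i + 1) (Nat.floor (8*(q i:ℝ)*r) + 1))^d := by
      rw [hFdef, Fintype.card_piFinset]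
      calc ∏ j, (T j).card ≤ ∏ _j : Fin d, (min (q i + 1) (Nat.floor (8*(q i:ℝ)*r) + 1)) :=
          Finset.prod_le_prod' (fun j _ => hTcard j)
      _ = _ := by rw [Finset.prod_const, Finset.card_univ, Fintype.card_fin]
    calc (F.card : ℝ) ≤ ((min (q i + 1) (Nat.floor (8*(q i:ℝ)*r) + 1) : ℕ) : ℝ)^d := by
          exact_mod_cast h5
    _ ≤ min ((q i:ℝ)+1) (8*(q i:ℝ)*r+1) ^ d := by
        refine pow_le_pow_left₀ (Nat.cast_nonneg _) ?_ d
        rw [Nat.cast_min]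
        refine min_le_min (by push_cast; linarith) ?_
        push_cast
        linarith [Nat.floor_le (show (0:ℝ) ≤ 8*(q i:ℝ)*r by positivity)]
  -- conclude
  refine hmeas.trans ?_
  have hCvol : volume (Metric.ball (0 : EuclideanSpace ℝ (Fin d)) 1) = ENNReal.ofReal C :=
    (ENNReal.ofReal_toReal measure_ball_lt_top.ne).symm
  rw [hCvol, ← ENNReal.ofReal_mul (pow_nonneg (by linarith) d),
    ← ENNReal.ofReal_natCast F.card,
    ← ENNReal.ofReal_mul (Nat.cast_nonneg _)]
  apply ENNReal.ofReal_le_ofReal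
  have hr' : (q i : ℝ) ^ (-(d:ℝ)/α) ≤ r := by rw [← hδdef]; exact hr
  have hcore := core_ineq d α (q i:ℝ) r hα hαd.le hQ2 hr'
  have hδα : (r/δ)^α = r^α * (q i:ℝ)^d := by
    rw [Real.div_rpow hr0.le hδ0.le, hδdef, ← Real.rpow_mul hQ0.le]
    have he : (-(d:ℝ)/α)*α = -(d:ℝ) := by field_simp
    rw [he, Real.rpow_neg hQ0.le, Real.rpow_natCast]; field_simp
  have hδd : δ^((d:ℕ):ℝ) = δ^d := Real.rpow_natCast δ d
  rw [hδα, hδd]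
  have hnn : (0:ℝ) ≤ (3*δ)^d * C := mul_nonneg (pow_nonneg (by linarith) d) hC0.le
  calc (F.card:ℝ) * ((3*δ)^d * C)
      ≤ (min ((q i:ℝ)+1) (8*(q i:ℝ)*r+1) ^ d) * ((3*δ)^d * C) :=
        mul_le_mul_of_nonneg_right hcardR hnn
    _ ≤ (9^d * (r^α * (q i:ℝ)^d)) * ((3*δ)^d * C) :=
        mul_le_mul_of_nonneg_right hcore hnn
    _ = 9^d*3^d*C * (r^α * (q i:ℝ)^d) * δ^d := by ring
end

section
/- For every δ > 0, r ≥ δ, and f ∈ L^2(E_δ), where E ⊂ ℝ^d is {δ_i}-discrete α-regular with δ = δ_i and E is contained in the unit ball, the following interpolation bound holds for all small ε > 0: ‖(f·χ_{E_δ}) ∗ χ_{B(0,r)}‖_{L^2(ℝ^d)} ≲_ε r^{(d+α+ε)/2} δ^{(d−α)/2 − ε} ‖f‖_{L^2(E_δ)}. -/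
open MeasureTheory ENNReal

/-- `E ⊂ ℝ^d` is `{δ_i}`-discrete `α`-regular. -/
def DiscreteRegular (d : ℕ) (α : ℝ) (E : Set (EuclideanSpace ℝ (Fin d))) (δ : ℕ → ℝ) : Prop :=
  (∀ i, 0 < δ i) ∧ Filter.Tendsto δ Filter.atTop (nhds 0) ∧
  ∃ ε₀ : ℝ, 0 < ε₀ ∧ ∀ ε : ℝ, 0 < ε → ε < ε₀ → ∃ K : ℝ, 0 < K ∧
    ∀ (i : ℕ) (x : EuclideanSpace ℝ (Fin d)) (r : ℝ), δ i ≤ r →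
      volume (Metric.cthickening (δ i) E ∩ Metric.ball x r) ≤
        ENNReal.ofReal (K * (r / δ i) ^ (α + ε) * δ i ^ ((d : ℝ) - ε))

lemma schur_test {X : Type*} [MeasurableSpace X] (μ : Measure X) [SFinite μ]
    (k : X → X → ℝ≥0∞) (hk : Measurable (Function.uncurry k))
    (hk01 : ∀ x y, k x y = 0 ∨ k x y = 1)
    (H : X → ℝ≥0∞) (hH : Measurable H) (A B : ℝ≥0∞)
    (hA : ∀ x, ∫⁻ y, k x y ∂μ ≤ A) (hB : ∀ y, ∫⁻ x, k x y ∂μ ≤ B) :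
    ∫⁻ x, (∫⁻ y, k x y * H y ∂μ) ^ (2:ℝ) ∂μ ≤ A * B * ∫⁻ y, H y ^ (2:ℝ) ∂μ := by
  have hksq : ∀ x y, k x y * k x y = k x y := by
    intro x y; rcases hk01 x y with h | h <;> simp [h]
  have hkx : ∀ x, Measurable (k x) := fun x => hk.comp (measurable_prodMk_left)
  have step1 : ∀ x, (∫⁻ y, k x y * H y ∂μ) ^ (2:ℝ) ≤ A * ∫⁻ y, k x y * H y ^ (2:ℝ) ∂μ := by
    intro x
    have hconj : Real.HolderConjugate 2 2 := Real.HolderConjugate.two_two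
    have hholder := ENNReal.lintegral_mul_le_Lp_mul_Lq μ hconj
      (f := fun y => k x y) (g := fun y => k x y * H y)
      (hkx x).aemeasurable ((hkx x).mul hH).aemeasurable
    have hrw : ∀ y, ((fun y => k x y) * fun y => k x y * H y) y = k x y * H y := by
      intro y; simp only [Pi.mul_apply]; rw [← mul_assoc, hksq]
    rw [lintegral_congr hrw] at hholder
    have hsq : ∀ y, k x y ^ (2:ℝ) = k x y := by
      intro y; rcases hk01 x y with h | h <;> simp [h]
    have hsq2 : ∀ y, (k x y * H y) ^ (2:ℝ) = k x y * H y ^ (2:ℝ) := by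
      intro y
      rw [ENNReal.mul_rpow_of_nonneg _ _ (by norm_num), hsq]
    calc (∫⁻ y, k x y * H y ∂μ) ^ (2:ℝ)
        ≤ ((∫⁻ y, k x y ^ (2:ℝ) ∂μ) ^ (1/2:ℝ) * (∫⁻ y, (k x y * H y) ^ (2:ℝ) ∂μ) ^ (1/2:ℝ)) ^ (2:ℝ) :=
          ENNReal.rpow_le_rpow hholder (by norm_num)
      _ = (∫⁻ y, k x y ^ (2:ℝ) ∂μ) * ∫⁻ y, (k x y * H y) ^ (2:ℝ) ∂μ := by
          rw [ENNReal.mul_rpow_of_nonneg _ _ (by norm_num), ← ENNReal.rpow_mul, ← ENNReal.rpow_mul]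
          norm_num
      _ ≤ A * ∫⁻ y, k x y * H y ^ (2:ℝ) ∂μ := by
          refine mul_le_mul' ?_ ?_
          · rw [lintegral_congr hsq]; exact hA x
          · exact le_of_eq (lintegral_congr hsq2)
  have hmeasp : Measurable (fun p : X × X => k p.1 p.2 * H p.2 ^ (2:ℝ)) :=
    hk.mul ((hH.comp measurable_snd).pow_const _)
  have hmeas2 : Measurable fun x => ∫⁻ y, k x y * H y ^ (2:ℝ) ∂μ :=
    Measurable.lintegral_prod_right hmeasp
  calc ∫⁻ x, (∫⁻ y, k x y * H y ∂μ) ^ (2:ℝ) ∂μ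
      ≤ ∫⁻ x, A * ∫⁻ y, k x y * H y ^ (2:ℝ) ∂μ ∂μ := lintegral_mono step1
    _ = A * ∫⁻ x, ∫⁻ y, k x y * H y ^ (2:ℝ) ∂μ ∂μ := by
        rw [lintegral_const_mul A hmeas2]
    _ = A * ∫⁻ y, ∫⁻ x, k x y * H y ^ (2:ℝ) ∂μ ∂μ := by
        rw [lintegral_lintegral_swap hmeasp.aemeasurable]
    _ ≤ A * ∫⁻ y, H y ^ (2:ℝ) * B ∂μ := by
        refine mul_le_mul' le_rfl (lintegral_mono fun y => ?_)
        have hky : Measurable fun x => k x y := by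
          have : (fun x => k x y) = Function.uncurry k ∘ fun x => (x, y) := rfl
          rw [this]; exact hk.comp (measurable_id.prodMk measurable_const)
        rw [lintegral_mul_const _ hky, mul_comm]
        exact mul_le_mul' le_rfl (hB y)
    _ = A * B * ∫⁻ y, H y ^ (2:ℝ) ∂μ := by
        rw [lintegral_mul_const B (hH.pow_const _), mul_assoc, mul_comm B]

/-- Interpolation bound: for `E ⊂ ℝ^d` `{δ_i}`-discrete `α`-regular in the unit ball,
`δ = δ_i`, `r ≥ δ` and `f ∈ L²(E_δ)`, for all small `ε > 0`,
`‖(f·χ_{E_δ}) ∗ χ_{B(0,r)}‖_{L²} ≲_ε r^{(d+α+ε)/2} δ^{(d-α)/2-ε} ‖f‖_{L²(E_δ)}`. -/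
theorem stmt_9 (d : ℕ) (hd : 1 ≤ d) (α : ℝ) (hα : 0 < α)
    (E : Set (EuclideanSpace ℝ (Fin d))) (hE : IsCompact E)
    (hEball : E ⊆ Metric.closedBall 0 1)
    (δseq : ℕ → ℝ) (hreg : DiscreteRegular d α E δseq) :
    ∃ ε₀ : ℝ, 0 < ε₀ ∧ ∀ ε : ℝ, 0 < ε → ε < ε₀ → ∃ K : ℝ, 0 < K ∧
      ∀ (i : ℕ) (r : ℝ), δseq i ≤ r →
      ∀ f : EuclideanSpace ℝ (Fin d) → ℝ, Measurable f →
        eLpNorm (fun x => ∫ y, (Metric.cthickening (δseq i) E).indicator f y *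
            (Metric.ball (0 : EuclideanSpace ℝ (Fin d)) r).indicator
              (fun _ => (1 : ℝ)) (x - y)) 2 volume ≤
          ENNReal.ofReal (K * r ^ (((d : ℝ) + α + ε) / 2) *
              δseq i ^ (((d : ℝ) - α) / 2 - ε)) *
            eLpNorm ((Metric.cthickening (δseq i) E).indicator f) 2 volume := by
  
  classical
  haveI : Nontrivial (EuclideanSpace ℝ (Fin d)) := Module.nontrivial_of_finrank_pos (R := ℝ)
    (by rw [finrank_euclideanSpace_fin]; omega)
  obtain ⟨hδpos, -, ε₀, hε₀, hKex⟩ := hreg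
  refine ⟨ε₀, hε₀, fun ε hε hεlt => ?_⟩
  obtain ⟨K, hK, hKb⟩ := hKex ε hε hεlt
  set c := (volume (Metric.ball (0 : EuclideanSpace ℝ (Fin d)) 1)).toReal with hc_def
  have hcball : volume (Metric.ball (0 : EuclideanSpace ℝ (Fin d)) 1) = ENNReal.ofReal c :=
    (ENNReal.ofReal_toReal measure_ball_lt_top.ne).symm
  have hc : 0 < c := ENNReal.toReal_pos (Metric.measure_ball_pos volume 0 one_pos).ne'
    measure_ball_lt_top.ne
  refine ⟨Real.sqrt (K * c), Real.sqrt_pos.mpr (by positivity), fun i r hr f hf => ?_⟩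
  set δ := δseq i with hδ_def
  have hδ : 0 < δ := hδpos i
  have hrpos : 0 < r := hδ.trans_le hr
  set Eδ := Metric.cthickening δ E with hEδ_def
  have hEδm : MeasurableSet Eδ := Metric.isClosed_cthickening.measurableSet
  set g : EuclideanSpace ℝ (Fin d) → ℝ := Eδ.indicator f with hg_def
  have hg : Measurable g := hf.indicator hEδm
  set H : EuclideanSpace ℝ (Fin d) → ℝ≥0∞ := fun y => (‖g y‖₊ : ℝ≥0∞) with hH_def
  have hH : Measurable H := hg.nnnorm.coe_nnreal_ennreal
  set k : EuclideanSpace ℝ (Fin d) → EuclideanSpace ℝ (Fin d) → ℝ≥0∞ :=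
    fun x y => (Eδ ∩ Metric.ball x r).indicator (fun _ => (1:ℝ≥0∞)) y with hk_def
  have hk01 : ∀ x y, k x y = 0 ∨ k x y = 1 := by
    intro x y
    by_cases h : y ∈ Eδ ∩ Metric.ball x r
    · right; simp [hk_def, h]
    · left; simp [hk_def, h]
  have hSmeas : MeasurableSet {p : EuclideanSpace ℝ (Fin d) × EuclideanSpace ℝ (Fin d) | p.2 ∈ Eδ ∧ dist p.2 p.1 < r} := by
    refine (hEδm.preimage measurable_snd).inter ?_
    exact measurableSet_lt (measurable_dist.comp (measurable_snd.prodMk measurable_fst))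
      measurable_const
  have hk : Measurable (Function.uncurry k) := by
    have huk : Function.uncurry k =
        {p : EuclideanSpace ℝ (Fin d) × EuclideanSpace ℝ (Fin d) |
          p.2 ∈ Eδ ∧ dist p.2 p.1 < r}.indicator (fun _ => (1:ℝ≥0∞)) := by
      funext p
      simp only [Function.uncurry, hk_def, Set.indicator_apply, Set.mem_inter_iff,
        Metric.mem_ball, Set.mem_setOf_eq]
    rw [huk]
    exact measurable_const.indicator hSmeas
  set Aval : ℝ≥0∞ := ENNReal.ofReal (K * (r / δ) ^ (α + ε) * δ ^ ((d : ℝ) - ε)) with hA_def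
  set Bval : ℝ≥0∞ := ENNReal.ofReal (r ^ d * c) with hB_def
  have hA : ∀ x, ∫⁻ y, k x y ≤ Aval := by
    intro x
    have : ∫⁻ y, k x y = volume (Eδ ∩ Metric.ball x r) :=
      lintegral_indicator_one (hEδm.inter measurableSet_ball)
    rw [this]
    exact hKb i x r hr
  have hB : ∀ y, ∫⁻ x, k x y ≤ Bval := by
    intro y
    have hb : ∀ x, k x y ≤ (Metric.ball y r).indicator (fun _ => (1:ℝ≥0∞)) x := by
      intro x
      by_cases h : y ∈ Eδ ∩ Metric.ball x r
      · have hx : x ∈ Metric.ball y r := by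
          rw [Metric.mem_ball, dist_comm]; exact h.2
        simp [hk_def, h, Set.indicator_of_mem hx]
      · simp [hk_def, Set.indicator_of_notMem h]
    calc ∫⁻ x, k x y ≤ ∫⁻ x, (Metric.ball y r).indicator (fun _ => (1:ℝ≥0∞)) x :=
          lintegral_mono hb
      _ = volume (Metric.ball y r) := lintegral_indicator_one measurableSet_ball
      _ = ENNReal.ofReal (r ^ d) * volume (Metric.ball (0 : EuclideanSpace ℝ (Fin d)) 1) := by
          rw [Measure.addHaar_ball volume y hrpos.le, finrank_euclideanSpace_fin]
      _ = Bval := by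
          rw [hcball, ← ENNReal.ofReal_mul (by positivity)]
  have key := schur_test volume k hk hk01 H hH Aval Bval hA hB
  -- pointwise bound on the convolution
  have hpt : ∀ x, (‖∫ y, g y * (Metric.ball (0 : EuclideanSpace ℝ (Fin d)) r).indicator (fun _ => (1:ℝ)) (x - y)‖₊ : ℝ≥0∞)
      ≤ ∫⁻ y, k x y * H y := by
    intro x
    refine le_trans (enorm_integral_le_lintegral_enorm _) (le_of_eq ?_)
    refine lintegral_congr fun y => ?_
    have hmem : x - y ∈ Metric.ball (0 : EuclideanSpace ℝ (Fin d)) r ↔ y ∈ Metric.ball x r := by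
      rw [Metric.mem_ball, Metric.mem_ball, dist_eq_norm, dist_comm, dist_eq_norm]
      simp [norm_sub_rev]
    by_cases hyE : y ∈ Eδ
    · by_cases hyb : y ∈ Metric.ball x r
      · have h1 : x - y ∈ Metric.ball (0 : EuclideanSpace ℝ (Fin d)) r := hmem.mpr hyb
        have h2 : y ∈ Eδ ∩ Metric.ball x r := ⟨hyE, hyb⟩
        simp [hk_def, hH_def, Set.indicator_of_mem h1, Set.indicator_of_mem h2, enorm_eq_nnnorm]
      · have h1 : x - y ∉ Metric.ball (0 : EuclideanSpace ℝ (Fin d)) r := fun h => hyb (hmem.mp h)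
        have h2 : y ∉ Eδ ∩ Metric.ball x r := fun h => hyb h.2
        simp [hk_def, Set.indicator_of_notMem h1, Set.indicator_of_notMem h2]
    · have h2 : y ∉ Eδ ∩ Metric.ball x r := fun h => hyE h.1
      have hgy : g y = 0 := Set.indicator_of_notMem hyE f
      simp [hk_def, hH_def, hgy, Set.indicator_of_notMem h2]
  -- rewrite both eLpNorms
  have heL : ∀ (F : EuclideanSpace ℝ (Fin d) → ℝ), eLpNorm F 2 volume
      = (∫⁻ x, (‖F x‖₊ : ℝ≥0∞) ^ (2:ℝ)) ^ (1/2 : ℝ) := by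
    intro F
    rw [eLpNorm_eq_lintegral_rpow_enorm_toReal two_ne_zero ENNReal.ofNat_ne_top]
    norm_num
    rfl
  have main : eLpNorm (fun x => ∫ y, g y *
        (Metric.ball (0 : EuclideanSpace ℝ (Fin d)) r).indicator (fun _ => (1:ℝ)) (x - y)) 2 volume
      ≤ (Aval * Bval) ^ (1/2:ℝ) * eLpNorm g 2 volume := by
    rw [heL, heL]
    have step : ∫⁻ x, (‖∫ y, g y * (Metric.ball (0 : EuclideanSpace ℝ (Fin d)) r).indicator (fun _ => (1:ℝ)) (x - y)‖₊
        : ℝ≥0∞) ^ (2:ℝ) ≤ Aval * Bval * ∫⁻ y, H y ^ (2:ℝ) := by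
      refine le_trans (lintegral_mono fun x => ?_) key
      exact ENNReal.rpow_le_rpow (hpt x) (by norm_num)
    calc (∫⁻ x, (‖∫ y, g y * (Metric.ball (0 : EuclideanSpace ℝ (Fin d)) r).indicator (fun _ => (1:ℝ)) (x - y)‖₊
          : ℝ≥0∞) ^ (2:ℝ)) ^ (1/2:ℝ)
        ≤ (Aval * Bval * ∫⁻ y, H y ^ (2:ℝ)) ^ (1/2:ℝ) :=
          ENNReal.rpow_le_rpow step (by norm_num)
      _ = (Aval * Bval) ^ (1/2:ℝ) * (∫⁻ y, H y ^ (2:ℝ)) ^ (1/2:ℝ) :=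
          ENNReal.mul_rpow_of_nonneg _ _ (by norm_num)
  refine le_trans main (mul_le_mul' (le_of_eq ?_) le_rfl)
  -- coefficient computation
  have hP : K * (r / δ) ^ (α + ε) * δ ^ ((d:ℝ) - ε) * (r ^ d * c)
      = (K * c) * r ^ ((d:ℝ) + α + ε) * δ ^ ((d:ℝ) - α - 2*ε) := by
    have h1 : (r / δ) ^ (α + ε) = r ^ (α + ε) * (δ ^ (α + ε))⁻¹ := by
      rw [Real.div_rpow hrpos.le hδ.le, div_eq_mul_inv]
    have h2 : r ^ ((d:ℝ) + α + ε) = r ^ (d:ℕ) * r ^ (α + ε) := by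
      rw [show (d:ℝ) + α + ε = (d:ℝ) + (α + ε) by ring, Real.rpow_add hrpos,
          Real.rpow_natCast]
    have h3 : δ ^ ((d:ℝ) - α - 2*ε) = δ ^ ((d:ℝ) - ε) * (δ ^ (α + ε))⁻¹ := by
      rw [show (d:ℝ) - α - 2*ε = ((d:ℝ) - ε) + (-(α + ε)) by ring, Real.rpow_add hδ,
          Real.rpow_neg hδ.le]
    rw [h1, h2, h3]; ring
  have hAB : Aval * Bval = ENNReal.ofReal ((K * c) * r ^ ((d:ℝ) + α + ε)
      * δ ^ ((d:ℝ) - α - 2*ε)) := by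
    rw [hA_def, hB_def, ← ENNReal.ofReal_mul (by positivity), ← hP]
  rw [hAB, ENNReal.ofReal_rpow_of_nonneg (by positivity) (by norm_num)]
  congr 1
  rw [Real.mul_rpow (by positivity) (Real.rpow_nonneg hδ.le _),
      Real.mul_rpow (by positivity) (Real.rpow_nonneg hrpos.le _),
      ← Real.rpow_mul hrpos.le, ← Real.rpow_mul hδ.le,
      Real.sqrt_eq_rpow,
      show ((d:ℝ) + α + ε) * (1/2) = ((d:ℝ) + α + ε) / 2 by ring,
      show ((d:ℝ) - α - 2*ε) * (1/2) = ((d:ℝ) - α) / 2 - ε by ring]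
end

section
/- Let E ⊂ ℝ^d be compact with Frostman measure μ. Suppose E_1, E_2 ⊂ E are disjoint with μ(E_i) > 0, there exists x ∈ E_1 with dim_H({(|x−y_1|, |y_1−y_2|, |y_2−x|) : y_1, y_2 ∈ E_1, x, y_1, y_2 distinct}) ≥ γ_1 > 0, and for every y_1 ∈ E_1, dim_H({(|y_1−y_3|, |y_3−y_4|) : y_3, y_4 ∈ E_2 distinct}) ≥ γ_2 > 0. Then there exists x ∈ E such that the 'kite' edge-length set {(|x−y_1|, |y_1−y_2|, |y_2−x|, |y_1−y_3|, |y_3−y_4|) : y_1, y_2, y_3, y_4 ∈ E, all points distinct} ⊂ ℝ^5 has Hausdorff dimension at least γ_1 + γ_2. -/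
open MeasureTheory ENNReal

namespace Stmt16Aux

open Set
open scoped NNReal

/-- Half-open dyadic grid cube at scale `2⁻ᵏ`. -/
noncomputable def cube (m k : ℕ) (z : Fin m → ℤ) : Set (Fin m → ℝ) :=
  {x | ∀ c, ⌊x c * 2 ^ k⌋ = z c}

noncomputable def zOf (m k : ℕ) (x : Fin m → ℝ) : Fin m → ℤ := fun c => ⌊x c * 2 ^ k⌋

lemma mem_cube_zOf {m k : ℕ} (x : Fin m → ℝ) : x ∈ cube m k (zOf m k x) := fun _ => rfl

lemma eq_zOf_of_mem_cube {m k : ℕ} {x : Fin m → ℝ} {z : Fin m → ℤ}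
    (hx : x ∈ cube m k z) : z = zOf m k x := by
  funext c; exact (hx c).symm

lemma abs_sub_le_of_floor {a b : ℝ} (h : ⌊a⌋ = ⌊b⌋) : |a - b| ≤ 1 := by
  have h1 := Int.lt_floor_add_one a
  have h2 := Int.floor_le a
  have h3 := Int.lt_floor_add_one b
  have h4 := Int.floor_le b
  rw [h] at h1 h2
  rw [abs_le]; constructor <;> linarith

lemma dist_le_of_mem_cube {m k : ℕ} {x y : Fin m → ℝ} {z : Fin m → ℤ}
    (hx : x ∈ cube m k z) (hy : y ∈ cube m k z) : dist x y ≤ (2⁻¹ : ℝ) ^ k := by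
  have h2 : (0:ℝ) < 2 ^ k := by positivity
  rw [dist_pi_le_iff (by positivity)]
  intro c
  have hf : ⌊x c * 2 ^ k⌋ = ⌊y c * 2 ^ k⌋ := by rw [hx c, hy c]
  have := abs_sub_le_of_floor hf
  rw [← sub_mul, abs_mul, abs_of_pos h2] at this
  rw [Real.dist_eq, inv_pow, inv_eq_one_div, le_div_iff₀ h2]
  exact this

lemma diam_cube_le {m k : ℕ} (z : Fin m → ℤ) :
    Metric.ediam (cube m k z) ≤ ENNReal.ofReal ((2⁻¹ : ℝ) ^ k) := by
  apply Metric.ediam_le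
  intro x hx y hy
  rw [edist_dist]
  exact ENNReal.ofReal_le_ofReal (dist_le_of_mem_cube hx hy)

/-- If two points are coordinatewise within `2⁻ᵏ`, the grid coordinates differ by an element
of `{-1,0,1}` in each coordinate. -/
lemma zOf_close {m k : ℕ} {x y : Fin m → ℝ} (h : ∀ c, |x c - y c| ≤ (2⁻¹ : ℝ) ^ k) :
    ∃ e : Fin m → Fin 3, zOf m k x = fun c => zOf m k y c + (e c : ℤ) - 1 := by
  have key : ∀ c, zOf m k y c - 1 ≤ zOf m k x c ∧ zOf m k x c ≤ zOf m k y c + 1 := by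
    intro c
    have h2 : (0:ℝ) < 2 ^ k := by positivity
    have hb : |x c * 2 ^ k - y c * 2 ^ k| ≤ 1 := by
      rw [← sub_mul, abs_mul, abs_of_pos h2]
      calc |x c - y c| * 2 ^ k ≤ (2⁻¹:ℝ) ^ k * 2 ^ k :=
            mul_le_mul_of_nonneg_right (h c) (le_of_lt h2)
        _ = 1 := by rw [inv_pow, inv_mul_cancel₀ (ne_of_gt h2)]
    rw [abs_le] at hb
    unfold zOf
    constructor
    · have : ⌊y c * 2 ^ k⌋ ≤ ⌊x c * 2 ^ k + 1⌋ := Int.floor_le_floor (by linarith)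
      rw [Int.floor_add_one] at this; omega
    · have : ⌊x c * 2 ^ k⌋ ≤ ⌊y c * 2 ^ k + 1⌋ := Int.floor_le_floor (by linarith)
      rw [Int.floor_add_one] at this; omega
  refine ⟨fun c => ⟨(zOf m k x c - zOf m k y c + 1).toNat, ?_⟩, ?_⟩
  · have := key c; omega
  · funext c
    have := key c
    simp only [Fin.val_mk]
    push_cast
    omega


/-- Hausdorff content with exponent `σ` (no diameter restriction on covers). -/
noncomputable def content {α : Type*} [PseudoEMetricSpace α] (σ : ℝ) (hσ : 0 < σ) :
    OuterMeasure α :=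
  OuterMeasure.ofFunction (fun A => Metric.ediam A ^ σ)
    (by simp [Metric.ediam_empty, ENNReal.zero_rpow_of_pos hσ])

lemma content_le_diam {α : Type*} [PseudoEMetricSpace α] {σ : ℝ} (hσ : 0 < σ) (A : Set α) :
    content σ hσ A ≤ Metric.ediam A ^ σ :=
  OuterMeasure.ofFunction_le A

lemma content_le_tsum_diam {α : Type*} [PseudoEMetricSpace α] {σ : ℝ} (hσ : 0 < σ)
    {A : Set α} {U : ℕ → Set α} (hU : A ⊆ ⋃ i, U i) :
    content σ hσ A ≤ ∑' i, Metric.ediam (U i) ^ σ := by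
  refine le_trans (measure_mono hU) ?_
  refine le_trans (measure_iUnion_le U) ?_
  exact ENNReal.tsum_le_tsum fun i => content_le_diam hσ (U i)

/-- If a set has positive Hausdorff measure then it has positive content. -/
lemma content_ne_zero {α : Type*} [EMetricSpace α] [MeasurableSpace α] [BorelSpace α]
    {σ : ℝ} (hσ : 0 < σ) {B : Set α} (hB : μH[σ] B ≠ 0) : content σ hσ B ≠ 0 := by
  intro h0
  apply hB
  have hle : ∀ η : ℝ≥0, 0 < η → μH[σ] B ≤ η := by
    intro η hη
    rw [Measure.hausdorffMeasure_apply]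
    refine iSup₂_le fun r hr => ?_
    -- get a cover with total cost < min η (r ^ σ), hence with all diameters ≤ r
    have hχ : (0:ℝ≥0∞) < min (η : ℝ≥0∞) (r ^ σ) := by
      refine lt_min (by exact_mod_cast hη) ?_
      exact ENNReal.rpow_pos_of_nonneg hr (le_of_lt hσ)
    have : content σ hσ B < min (η : ℝ≥0∞) (r ^ σ) := by rw [h0]; exact hχ
    rw [content, OuterMeasure.ofFunction_apply] at this
    obtain ⟨U, hU⟩ := iInf_lt_iff.mp this
    obtain ⟨hUc, hUs⟩ := iInf_lt_iff.mp hU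
    have hdiam : ∀ i, Metric.ediam (U i) ≤ r := by
      intro i
      have h1 : Metric.ediam (U i) ^ σ ≤ min (η : ℝ≥0∞) (r ^ σ) :=
        le_of_lt (lt_of_le_of_lt (ENNReal.le_tsum i) hUs)
      have h2 : Metric.ediam (U i) ^ σ ≤ r ^ σ := le_trans h1 (min_le_right _ _)
      have := ENNReal.rpow_le_rpow h2 (le_of_lt (inv_pos.mpr hσ))
      rwa [← ENNReal.rpow_mul, ← ENNReal.rpow_mul, mul_inv_cancel₀ (ne_of_gt hσ),
        ENNReal.rpow_one, ENNReal.rpow_one] at this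
    have hstep : (⨅ (t : ℕ → Set α) (_ : B ⊆ ⋃ i, t i) (_ : ∀ i, Metric.ediam (t i) ≤ r),
        ∑' i, ⨆ _ : (t i).Nonempty, Metric.ediam (t i) ^ σ)
        ≤ ∑' i, ⨆ _ : (U i).Nonempty, Metric.ediam (U i) ^ σ := by
      refine iInf_le_of_le U ?_
      refine iInf_le_of_le hUc ?_
      exact iInf_le _ hdiam
    refine le_trans hstep ?_
    have hguard : (∑' i, ⨆ _ : (U i).Nonempty, Metric.ediam (U i) ^ σ)
        ≤ ∑' i, Metric.ediam (U i) ^ σ :=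
      ENNReal.tsum_le_tsum fun i => iSup_le fun _ => le_rfl
    exact le_trans hguard (le_trans (le_of_lt hUs) (min_le_left _ _))
  refine le_antisymm ?_ (zero_le)
  refine ENNReal.le_of_forall_pos_le_add fun ε hε _ => ?_
  simpa using hle ε hε


/-- Regrouping a sum according to the fibers of `κ`. -/
lemma tsum_regroup {ι : Type*} (g : ι → ℝ≥0∞) (κ : ι → ℕ) (f : ℕ → ℝ≥0∞) :
    ∑' p, g p * f (κ p) = ∑' k, f k * ∑' p, if κ p = k then g p else 0 := by
  classical
  have h1 : ∀ p, g p * f (κ p) = ∑' k : ℕ, if κ p = k then g p * f k else 0 := by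
    intro p
    rw [show (fun k => if κ p = k then g p * f k else 0)
        = fun k => if k = κ p then g p * f (κ p) else 0 by
      funext k; by_cases h : k = κ p <;> simp [h, eq_comm]]
    exact (tsum_ite_eq (κ p) (fun _ => g p * f (κ p))).symm
  calc ∑' p, g p * f (κ p) = ∑' p, ∑' k, if κ p = k then g p * f k else 0 := by
        exact tsum_congr h1
    _ = ∑' k, ∑' p, if κ p = k then g p * f k else 0 := ENNReal.tsum_comm
    _ = ∑' k, f k * ∑' p, if κ p = k then g p else 0 := by
        refine tsum_congr fun k => ?_
        rw [← ENNReal.tsum_mul_left]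
        refine tsum_congr fun p => ?_
        by_cases h : κ p = k <;> simp [h, mul_comm]

/-- θ k = 1/((k+1)(k+2)); its total sum is at most 1. -/
lemma tsum_theta_le :
    ∑' k : ℕ, ENNReal.ofReal (((k:ℝ)+1)⁻¹ * ((k:ℝ)+2)⁻¹) ≤ 1 := by
  rw [ENNReal.tsum_eq_iSup_sum]
  refine iSup_le fun F => ?_
  obtain ⟨N, hN⟩ : ∃ N, ∀ k ∈ F, k < N := ⟨(F.sup id) + 1, fun k hk =>
    Nat.lt_succ_of_le (Finset.le_sup (f := id) hk)⟩
  calc ∑ k ∈ F, ENNReal.ofReal (((k:ℝ)+1)⁻¹ * ((k:ℝ)+2)⁻¹)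
      ≤ ∑ k ∈ Finset.range N, ENNReal.ofReal (((k:ℝ)+1)⁻¹ * ((k:ℝ)+2)⁻¹) := by
        refine Finset.sum_le_sum_of_subset ?_
        intro k hk; exact Finset.mem_range.mpr (hN k hk)
    _ = ENNReal.ofReal (∑ k ∈ Finset.range N, (((k:ℝ)+1)⁻¹ * ((k:ℝ)+2)⁻¹)) := by
        rw [ENNReal.ofReal_sum_of_nonneg]
        intro i _; positivity
    _ ≤ 1 := by
        rw [show (1:ℝ≥0∞) = ENNReal.ofReal 1 by simp]
        apply ENNReal.ofReal_le_ofReal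
        have hterm : ∀ k : ℕ, ((k:ℝ)+1)⁻¹ * ((k:ℝ)+2)⁻¹
            = (fun j : ℕ => ((j:ℝ)+1)⁻¹) k - (fun j : ℕ => ((j:ℝ)+1)⁻¹) (k+1) := by
          intro k
          have h1 : ((k:ℝ)+1) ≠ 0 := by positivity
          have h2 : ((k:ℝ)+2) ≠ 0 := by positivity
          simp only [Nat.cast_add, Nat.cast_one]
          rw [show (k:ℝ) + 1 + 1 = (k:ℝ) + 2 by ring]
          field_simp
          norm_num
        calc ∑ k ∈ Finset.range N, (((k:ℝ)+1)⁻¹ * ((k:ℝ)+2)⁻¹)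
            = ∑ k ∈ Finset.range N,
              ((fun j : ℕ => ((j:ℝ)+1)⁻¹) k - (fun j : ℕ => ((j:ℝ)+1)⁻¹) (k+1)) :=
              Finset.sum_congr rfl fun k _ => hterm k
          _ = (fun j : ℕ => ((j:ℝ)+1)⁻¹) 0 - (fun j : ℕ => ((j:ℝ)+1)⁻¹) N :=
              Finset.sum_range_sub' _ N
          _ ≤ 1 := by
              simp only [Nat.cast_zero]
              have : (0:ℝ) ≤ ((N:ℝ)+1)⁻¹ := by positivity
              norm_num
              linarith


set_option maxHeartbeats 1000000 in
lemma cover_bound (m n : ℕ) (t s ε : ℝ) (ht : 0 < t) (hs : 0 < s) (hε : 0 < ε) :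
    ∃ CC : ℝ≥0∞, CC ≠ 0 ∧ CC ≠ ⊤ ∧
    ∀ (S : Set ((Fin m → ℝ) × (Fin n → ℝ))) (Bset : Set (Fin m → ℝ)) (j : ℕ),
      (∀ b ∈ Bset, ∀ W : ℕ → Set (Fin n → ℝ), {y | (b, y) ∈ S} ⊆ (⋃ i, W i) →
        (∀ i, Metric.ediam (W i) ≤ ENNReal.ofReal ((2⁻¹:ℝ) ^ (j+1))) →
        1 ≤ ∑' i, Metric.ediam (W i) ^ t) →
      ∀ U : ℕ → Set ((Fin m → ℝ) × (Fin n → ℝ)), S ⊆ (⋃ i, U i) →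
      (∀ i, Metric.ediam (U i) ≤ ENNReal.ofReal ((2⁻¹:ℝ) ^ (j+1))) →
      ∀ εr : ℝ, 0 < εr →
      content (s + ε) (by linarith) Bset ≤
        CC * ((∑' i, ⨆ _ : (U i).Nonempty, Metric.ediam (U i) ^ (s + t)) +
          ENNReal.ofReal εr) := by
  classical
  have hst : 0 < s + t := by linarith
  -- geometric constant
  set rε : ℝ := (2⁻¹:ℝ) ^ ε with hrεdef
  have hrεpos : 0 < rε := Real.rpow_pos_of_pos (by norm_num) ε
  have hrεlt : rε < 1 := Real.rpow_lt_one (by norm_num) (by norm_num) hε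
  have hsummable : Summable (fun i : ℕ => (i:ℝ)^2 * rε^i) :=
    summable_pow_mul_geometric_of_norm_lt_one 2
      (by rw [Real.norm_eq_abs, abs_of_pos hrεpos]; exact hrεlt)
  set T : ℝ := ∑' i : ℕ, (i:ℝ)^2 * rε^i with hTdef
  have hTnonneg : 0 ≤ T := tsum_nonneg (fun i => by positivity)
  set C₂ : ℝ := 2 * (rε⁻¹ * rε⁻¹) * T + 1 with hC₂def
  have hC₂ : ∀ k : ℕ, 2 * (((k:ℝ)+1) * ((k:ℝ)+2)) * rε^k ≤ C₂ := by
    intro k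
    have hterm : ((k+2:ℕ):ℝ)^2 * rε^(k+2) ≤ T :=
      hsummable.le_tsum (k+2) (fun i _ => by positivity)
    have hcast : ((k+2:ℕ):ℝ) = (k:ℝ) + 2 := by push_cast; ring
    rw [hcast] at hterm
    have hpowpos : 0 < rε ^ k := by positivity
    have h1 : ((k:ℝ)+1) * ((k:ℝ)+2) ≤ ((k:ℝ)+2)^2 := by nlinarith [Nat.cast_nonneg (α := ℝ) k]
    have h2 : 2 * (((k:ℝ)+1) * ((k:ℝ)+2)) * rε^k ≤ 2 * ((k:ℝ)+2)^2 * rε^k := by nlinarith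
    have h3 : 2 * ((k:ℝ)+2)^2 * rε^k = 2 * (rε⁻¹ * rε⁻¹) * (((k:ℝ)+2)^2 * rε^(k+2)) := by
      field_simp
      ring
    have h4 : 2 * (rε⁻¹ * rε⁻¹) * (((k:ℝ)+2)^2 * rε^(k+2)) ≤ 2 * (rε⁻¹ * rε⁻¹) * T := by
      have : (0:ℝ) ≤ 2 * (rε⁻¹ * rε⁻¹) := by positivity
      exact mul_le_mul_of_nonneg_left hterm this
    rw [hC₂def]; linarith
  refine ⟨(ENNReal.ofReal C₂ + 1) * (3:ℝ≥0∞)^m * (2:ℝ≥0∞)^(s+t), ?_, ?_, ?_⟩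
  · refine mul_ne_zero (mul_ne_zero ?_ ?_) ?_
    · simp
    · exact pow_ne_zero _ (by norm_num)
    · exact (ENNReal.rpow_pos_of_nonneg (by norm_num) (le_of_lt hst)).ne'
  · refine ENNReal.mul_ne_top (ENNReal.mul_ne_top ?_ ?_) ?_
    · exact ENNReal.add_ne_top.mpr ⟨ENNReal.ofReal_ne_top, ENNReal.one_ne_top⟩
    · exact ENNReal.pow_ne_top (by norm_num)
    · exact ENNReal.rpow_ne_top_of_nonneg (le_of_lt hst) (by norm_num)
  intro S Bset j hBn U hSU hUd εr hεr
  set β : ℝ := (2⁻¹:ℝ) ^ (j+1) with hβdef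
  have hβpos : 0 < β := by positivity
  have hβhalf : β ≤ 2⁻¹ := by
    rw [hβdef]
    calc (2⁻¹:ℝ) ^ (j+1) ≤ (2⁻¹:ℝ) ^ 1 :=
          pow_le_pow_of_le_one (by norm_num) (by norm_num) (by omega)
      _ = 2⁻¹ := pow_one _
  -- the slack sequence
  set η : ℕ → ℝ := fun i => min β ((εr * 2⁻¹ ^ (i+1)) ^ (s+t)⁻¹) with hηdef
  have hηpos : ∀ i, 0 < η i := by
    intro i
    refine lt_min hβpos ?_
    exact Real.rpow_pos_of_pos (by positivity) _
  have hηβ : ∀ i, η i ≤ β := fun i => min_le_left _ _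
  have hηsum : ∑' i : ℕ, ENNReal.ofReal (η i) ^ (s+t) ≤ ENNReal.ofReal εr := by
    have hone : ∀ i : ℕ, ENNReal.ofReal (η i) ^ (s+t)
        ≤ ENNReal.ofReal εr * ENNReal.ofReal 2⁻¹ ^ (i+1) := by
      intro i
      have hyi : (0:ℝ) < εr * 2⁻¹ ^ (i+1) := by positivity
      have h1 : ENNReal.ofReal (η i) ^ (s+t)
          ≤ ENNReal.ofReal ((εr * 2⁻¹ ^ (i+1)) ^ (s+t)⁻¹) ^ (s+t) :=
        ENNReal.rpow_le_rpow (ENNReal.ofReal_le_ofReal (min_le_right _ _)) (le_of_lt hst)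
      have h2 : ENNReal.ofReal ((εr * 2⁻¹ ^ (i+1)) ^ (s+t)⁻¹) ^ (s+t)
          = ENNReal.ofReal (εr * 2⁻¹ ^ (i+1)) := by
        rw [ENNReal.ofReal_rpow_of_pos (Real.rpow_pos_of_pos hyi _),
          ← Real.rpow_mul (le_of_lt hyi), inv_mul_cancel₀ (ne_of_gt hst), Real.rpow_one]
      refine le_trans h1 ?_
      rw [h2, ENNReal.ofReal_mul (le_of_lt hεr), ENNReal.ofReal_pow (by norm_num)]
    refine le_trans (ENNReal.tsum_le_tsum hone) ?_
    rw [ENNReal.tsum_mul_left]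
    have hgeo : ∑' i : ℕ, ENNReal.ofReal 2⁻¹ ^ (i+1) ≤ 1 := by
      have : ∀ i : ℕ, ENNReal.ofReal 2⁻¹ ^ (i+1) = ENNReal.ofReal 2⁻¹ * ENNReal.ofReal 2⁻¹ ^ i := by
        intro i; rw [pow_succ, mul_comm]
      rw [tsum_congr this, ENNReal.tsum_mul_left, ENNReal.tsum_geometric]
      have h2 : ENNReal.ofReal (2⁻¹:ℝ) = 2⁻¹ := by
        rw [ENNReal.ofReal_inv_of_pos (by norm_num)]
        norm_num
      rw [h2, ENNReal.one_sub_inv_two, inv_inv]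
      rw [ENNReal.inv_mul_cancel] <;> norm_num
    calc ENNReal.ofReal εr * ∑' i : ℕ, ENNReal.ofReal 2⁻¹ ^ (i+1)
        ≤ ENNReal.ofReal εr * 1 := mul_le_mul_right hgeo _
      _ = ENNReal.ofReal εr := mul_one _
  -- diameters and dyadic scales
  have hUtop : ∀ i, Metric.ediam (U i) ≠ ⊤ :=
    fun i => ne_top_of_le_ne_top ENNReal.ofReal_ne_top (hUd i)
  set dd : ℕ → ℝ := fun i => max ((Metric.ediam (U i)).toReal) (η i) with hdddef
  have hdd0 : ∀ i, 0 < dd i := fun i => lt_max_of_lt_right (hηpos i)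
  have hddβ : ∀ i, dd i ≤ β := by
    intro i
    refine max_le ?_ (hηβ i)
    have := ENNReal.toReal_mono ENNReal.ofReal_ne_top (hUd i)
    rwa [ENNReal.toReal_ofReal (le_of_lt hβpos)] at this
  have hdiam_le : ∀ i, Metric.ediam (U i) ≤ ENNReal.ofReal (dd i) := by
    intro i
    rw [← ENNReal.ofReal_toReal (hUtop i)]
    exact ENNReal.ofReal_le_ofReal (le_max_left _ _)
  have hex : ∀ i, ∃ k : ℕ, (2⁻¹:ℝ) ^ (k+1) < dd i := by
    intro i
    obtain ⟨N, hN⟩ := exists_pow_lt_of_lt_one (hdd0 i) (show (2⁻¹:ℝ) < 1 by norm_num)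
    exact ⟨N, lt_of_le_of_lt (pow_le_pow_of_le_one (by norm_num) (by norm_num) (by omega)) hN⟩
  set kk : ℕ → ℕ := fun i => Nat.find (hex i) with hkkdef
  have hF1 : ∀ i, (2⁻¹:ℝ) ^ (kk i + 1) < dd i := fun i => Nat.find_spec (hex i)
  have hF2 : ∀ i, dd i ≤ (2⁻¹:ℝ) ^ (kk i) := by
    intro i
    rcases Nat.eq_zero_or_pos (kk i) with h0 | hpos
    · rw [h0, pow_zero]
      calc dd i ≤ β := hddβ i
        _ ≤ 2⁻¹ := hβhalf
        _ ≤ 1 := by norm_num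
    · have := Nat.find_min (hex i) (show kk i - 1 < kk i by omega)
      push_neg at this
      have heq : kk i - 1 + 1 = kk i := by omega
      rwa [heq] at this
  set Q : ℕ → ℝ≥0∞ := fun k => ENNReal.ofReal ((2⁻¹:ℝ) ^ k) with hQdef
  have hQ0 : ∀ k, Q k ≠ 0 := by
    intro k; simp only [hQdef, ne_eq, ENNReal.ofReal_eq_zero, not_le]; positivity
  have hQtop : ∀ k, Q k ≠ ⊤ := fun k => ENNReal.ofReal_ne_top
  -- the refined cover pieces
  set V : (ℕ × (Fin m → ℤ)) → Set ((Fin m → ℝ) × (Fin n → ℝ)) :=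
    fun p => {q | q ∈ U p.1 ∧ q.1 ∈ cube m (kk p.1) p.2} with hVdef
  have hdiamU_Q : ∀ i, Metric.ediam (U i) ≤ Q (kk i) :=
    fun i => le_trans (hdiam_le i) (ENNReal.ofReal_le_ofReal (hF2 i))
  have hsliceD : ∀ (p : ℕ × (Fin m → ℤ)) (b : Fin m → ℝ),
      Metric.ediam {y | (b, y) ∈ V p} ≤ Metric.ediam (U p.1) := by
    intro p b
    refine Metric.ediam_le fun y hy y' hy' => ?_
    have h1 : edist y y' = edist ((b,y)) ((b,y')) := by
      rw [Prod.edist_eq]; simp [edist_self]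
    rw [h1]
    exact EMetric.edist_le_diam_of_mem hy.1 hy'.1
  -- multiplicity counts and the pigeonhole decomposition
  set θ : ℕ → ℝ≥0∞ := fun k => ENNReal.ofReal (((k:ℝ)+1)⁻¹ * ((k:ℝ)+2)⁻¹) with hθdef
  have hθ0 : ∀ k, θ k ≠ 0 := by
    intro k; simp only [hθdef, ne_eq, ENNReal.ofReal_eq_zero, not_le]; positivity
  have hθtop : ∀ k, θ k ≠ ⊤ := fun k => ENNReal.ofReal_ne_top
  set Ncnt : ℕ → (Fin m → ℝ) → ℝ≥0∞ := fun k b =>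
    ∑' p : ℕ × (Fin m → ℤ), if kk p.1 = k ∧ ({y | (b, y) ∈ V p}).Nonempty
      then (1:ℝ≥0∞) else 0 with hNdef
  set Bt : ℕ → Set (Fin m → ℝ) := fun k =>
    {b ∈ Bset | θ k ≤ 2 * (Q k ^ t * Ncnt k b)} with hBtdef
  -- pigeonhole: every b in Bset lies in some B̃ k
  have hpigeon : Bset ⊆ ⋃ k, Bt k := by
    intro b hb
    by_contra hnot
    simp only [mem_iUnion, not_exists] at hnot
    have hlt : ∀ k, Q k ^ t * Ncnt k b ≤ 2⁻¹ * θ k := by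
      intro k
      have h1 : ¬ (θ k ≤ 2 * (Q k ^ t * Ncnt k b)) := by
        intro hle; exact hnot k ⟨hb, hle⟩
      push_neg at h1
      calc Q k ^ t * Ncnt k b = 2⁻¹ * (2 * (Q k ^ t * Ncnt k b)) := by
            rw [← mul_assoc, ENNReal.inv_mul_cancel (by norm_num) (by norm_num), one_mul]
        _ ≤ 2⁻¹ * θ k := mul_le_mul_right (le_of_lt h1) _
    -- the slice covering inequality from membership in Bset
    haveI : Encodable (ℕ × (Fin m → ℤ)) := Encodable.ofCountable _
    haveI : Denumerable (ℕ × (Fin m → ℤ)) := Denumerable.ofEncodableOfInfinite _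
    set e : (ℕ × (Fin m → ℤ)) ≃ ℕ := Denumerable.eqv _ with hedef
    set W : ℕ → Set (Fin n → ℝ) := fun l => {y | (b, y) ∈ V (e.symm l)} with hWdef
    have hWcov : {y | (b, y) ∈ S} ⊆ ⋃ l, W l := by
      intro y hy
      obtain ⟨_, ⟨i, rfl⟩, hyU⟩ := hSU hy
      refine mem_iUnion.mpr ⟨e (i, zOf m (kk i) b), ?_⟩
      simp only [hWdef, mem_setOf_eq, Equiv.symm_apply_apply]
      exact ⟨hyU, mem_cube_zOf b⟩
    have hWd : ∀ l, Metric.ediam (W l) ≤ ENNReal.ofReal β :=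
      fun l => le_trans (hsliceD _ b) (hUd _)
    have hone := hBn b hb W hWcov hWd
    have h2 : (1:ℝ≥0∞) ≤ ∑' p : ℕ × (Fin m → ℤ), Metric.ediam {y | (b, y) ∈ V p} ^ t := by
      rw [← Equiv.tsum_eq e.symm (fun p => Metric.ediam {y | (b, y) ∈ V p} ^ t)]
      exact hone
    have h3 : ∀ p : ℕ × (Fin m → ℤ), Metric.ediam {y | (b, y) ∈ V p} ^ t
        ≤ (if kk p.1 = kk p.1 ∧ ({y | (b, y) ∈ V p}).Nonempty then (1:ℝ≥0∞) else 0)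
          * Q (kk p.1) ^ t := by
      intro p
      by_cases hne : ({y | (b, y) ∈ V p}).Nonempty
      · rw [if_pos ⟨rfl, hne⟩, one_mul]
        exact ENNReal.rpow_le_rpow (le_trans (hsliceD p b) (hdiamU_Q p.1)) (le_of_lt ht)
      · rw [Set.not_nonempty_iff_eq_empty.mp hne]
        rw [Metric.ediam_empty, ENNReal.zero_rpow_of_pos ht]
        exact zero_le
    have h4 : (1:ℝ≥0∞) ≤ ∑' k, Q k ^ t * Ncnt k b := by
      refine le_trans (le_trans h2 (ENNReal.tsum_le_tsum h3)) ?_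
      have hre := tsum_regroup
        (fun p : ℕ × (Fin m → ℤ) =>
          if ({y | (b, y) ∈ V p}).Nonempty then (1:ℝ≥0∞) else 0)
        (fun p => kk p.1) (fun k => Q k ^ t)
      have hlhs : ∀ p : ℕ × (Fin m → ℤ),
          (if kk p.1 = kk p.1 ∧ ({y | (b, y) ∈ V p}).Nonempty then (1:ℝ≥0∞) else 0)
            * Q (kk p.1) ^ t
          = (if ({y | (b, y) ∈ V p}).Nonempty then (1:ℝ≥0∞) else 0) * Q (kk p.1) ^ t := by
        intro p; by_cases hne : ({y | (b, y) ∈ V p}).Nonempty <;> simp [hne]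
      rw [tsum_congr hlhs, hre]
      refine le_of_eq (tsum_congr fun k => ?_)
      rw [hNdef]
      congr 1
      refine tsum_congr fun p => ?_
      by_cases h5 : kk p.1 = k <;> by_cases h6 : ({y | (b, y) ∈ V p}).Nonempty <;>
        simp [h5, h6]
    have h7 : (1:ℝ≥0∞) ≤ 2⁻¹ * ∑' k, θ k := by
      refine le_trans h4 ?_
      rw [← ENNReal.tsum_mul_left]
      exact ENNReal.tsum_le_tsum hlt
    have h8 : (1:ℝ≥0∞) ≤ 2⁻¹ := by
      refine le_trans h7 ?_
      calc 2⁻¹ * ∑' k, θ k ≤ 2⁻¹ * 1 := mul_le_mul_right tsum_theta_le _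
        _ = 2⁻¹ := mul_one _
    norm_num at h8
  -- the heavy cube estimate for a fixed scale k
  set Mcnt : ℕ → (Fin m → ℤ) → ℝ≥0∞ := fun k z =>
    ∑' p : ℕ × (Fin m → ℤ), if kk p.1 = k ∧ p.2 = z ∧ (V p).Nonempty
      then (1:ℝ≥0∞) else 0 with hMdef
  set Mtot : ℕ → ℝ≥0∞ := fun k =>
    ∑' p : ℕ × (Fin m → ℤ), if kk p.1 = k ∧ (V p).Nonempty then (1:ℝ≥0∞) else 0 with hMtotdef
  have hNM : ∀ k b, Ncnt k b ≤ Mcnt k (zOf m k b) := by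
    intro k b
    refine ENNReal.tsum_le_tsum fun p => ?_
    by_cases h1 : kk p.1 = k ∧ ({y | (b, y) ∈ V p}).Nonempty
    · obtain ⟨y, hy⟩ := h1.2
      have hz : p.2 = zOf m k b := by
        have := eq_zOf_of_mem_cube (hy.2 : (b,y).1 ∈ cube m (kk p.1) p.2)
        rwa [h1.1] at this
      rw [if_pos h1, if_pos ⟨h1.1, hz, ⟨(b,y), hy⟩⟩]
    · rw [if_neg h1]; exact zero_le
  have hMsum : ∀ k, ∑' z : Fin m → ℤ, Mcnt k z = Mtot k := by
    intro k
    rw [hMdef, hMtotdef]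
    rw [ENNReal.tsum_comm]
    refine tsum_congr fun p => ?_
    by_cases h1 : kk p.1 = k ∧ (V p).Nonempty
    · have : ∀ z : Fin m → ℤ,
          (if kk p.1 = k ∧ p.2 = z ∧ (V p).Nonempty then (1:ℝ≥0∞) else 0)
          = if z = p.2 then (1:ℝ≥0∞) else 0 := by
        intro z
        by_cases h2 : z = p.2
        · subst h2; simp [h1.1, h1.2]
        · have : ¬ (kk p.1 = k ∧ p.2 = z ∧ (V p).Nonempty) := by
            intro hcon; exact h2 hcon.2.1.symm
          simp [this, h2]
      rw [tsum_congr this, tsum_ite_eq, if_pos h1]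
    · have : ∀ z : Fin m → ℤ,
          (if kk p.1 = k ∧ p.2 = z ∧ (V p).Nonempty then (1:ℝ≥0∞) else 0) = 0 := by
        intro z
        have : ¬ (kk p.1 = k ∧ p.2 = z ∧ (V p).Nonempty) := by
          intro hcon; exact h1 ⟨hcon.1, hcon.2.2⟩
        simp [this]
      rw [tsum_congr this, tsum_zero, if_neg h1]
  have hheavy : ∀ k, content (s + ε) (by linarith) (Bt k)
      ≤ 2 * (θ k)⁻¹ * Q k ^ (s + ε) * Q k ^ t * Mtot k := by
    intro k
    set Hv : Set (Fin m → ℤ) := {z | θ k ≤ 2 * (Q k ^ t * Mcnt k z)} with hHvdef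
    have hcov : Bt k ⊆ ⋃ z : Fin m → ℤ, (if z ∈ Hv then cube m k z else ∅) := by
      intro b hb
      refine mem_iUnion.mpr ⟨zOf m k b, ?_⟩
      have hzin : zOf m k b ∈ Hv := by
        rw [hHvdef, mem_setOf_eq]
        refine le_trans hb.2 ?_
        exact mul_le_mul_right (mul_le_mul_right (hNM k b) _) _
      rw [if_pos hzin]
      exact mem_cube_zOf b
    calc content (s + ε) (by linarith) (Bt k)
        ≤ ∑' z : Fin m → ℤ, content (s + ε) (by linarith)
            (if z ∈ Hv then cube m k z else ∅) := by
          refine le_trans (measure_mono hcov) ?_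
          exact measure_iUnion_le _
      _ ≤ ∑' z : Fin m → ℤ, (2 * (θ k)⁻¹ * Q k ^ (s + ε) * Q k ^ t) * Mcnt k z := by
          refine ENNReal.tsum_le_tsum fun z => ?_
          by_cases hz : z ∈ Hv
          · rw [if_pos hz]
            have h1 : content (s + ε) (by linarith) (cube m k z) ≤ Q k ^ (s + ε) := by
              refine le_trans (content_le_diam _ _) ?_
              exact ENNReal.rpow_le_rpow (diam_cube_le z) (by linarith)
            have h2 : (1:ℝ≥0∞) ≤ (θ k)⁻¹ * (2 * (Q k ^ t * Mcnt k z)) := by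
              rw [← ENNReal.inv_mul_cancel (hθ0 k) (hθtop k)]
              exact mul_le_mul_right hz _
            calc content (s + ε) (by linarith) (cube m k z)
                ≤ Q k ^ (s + ε) * 1 := by rw [mul_one]; exact h1
              _ ≤ Q k ^ (s + ε) * ((θ k)⁻¹ * (2 * (Q k ^ t * Mcnt k z))) :=
                  mul_le_mul_right h2 _
              _ = (2 * (θ k)⁻¹ * Q k ^ (s + ε) * Q k ^ t) * Mcnt k z := by ring
          · rw [if_neg hz]
            simp only [measure_empty]
            exact zero_le
      _ = 2 * (θ k)⁻¹ * Q k ^ (s + ε) * Q k ^ t * Mtot k := by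
          rw [ENNReal.tsum_mul_left, hMsum]
  -- the scale factor is uniformly bounded
  have h2θ : ∀ k, 2 * (θ k)⁻¹ * Q k ^ ε ≤ ENNReal.ofReal C₂ := by
    intro k
    have hθinv : (θ k)⁻¹ = ENNReal.ofReal (((k:ℝ)+1) * ((k:ℝ)+2)) := by
      simp only [hθdef]
      have h1 : ((k:ℝ)+1)⁻¹ * ((k:ℝ)+2)⁻¹ = (((k:ℝ)+1) * ((k:ℝ)+2))⁻¹ := by
        rw [mul_inv]
      rw [h1, ENNReal.ofReal_inv_of_pos (by positivity), inv_inv]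
    have hQε : Q k ^ ε = ENNReal.ofReal (rε ^ k) := by
      simp only [hQdef]
      rw [ENNReal.ofReal_rpow_of_pos (by positivity)]
      congr 1
      rw [← Real.rpow_natCast (2⁻¹:ℝ) k, ← Real.rpow_mul (by norm_num), mul_comm ((k:ℕ):ℝ) ε,
        Real.rpow_mul (by norm_num), Real.rpow_natCast]
    rw [hθinv, hQε]
    have h2 : (2:ℝ≥0∞) = ENNReal.ofReal 2 := by norm_num
    rw [h2, ← ENNReal.ofReal_mul (by norm_num), ← ENNReal.ofReal_mul (by positivity)]
    exact ENNReal.ofReal_le_ofReal (hC₂ k)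
  -- per-index inner sums
  have h6a : ∀ i : ℕ, (∑' z : Fin m → ℤ,
      (if (V (i, z)).Nonempty then (1:ℝ≥0∞) else 0) * Q (kk i) ^ (s+t))
      ≤ (3:ℝ≥0∞)^m * (if (U i).Nonempty then Q (kk i) ^ (s+t) else 0) := by
    intro i
    by_cases hUi : (U i).Nonempty
    · obtain ⟨q₀, hq₀⟩ := hUi
      set g : (Fin m → Fin 3) → (Fin m → ℤ) :=
        fun e => fun c => zOf m (kk i) q₀.1 c + (e c : ℤ) - 1 with hgdef
      have ginj : Function.Injective g := by
        intro w w' hww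
        funext c
        have h1 := congrFun hww c
        simp only [hgdef] at h1
        have h2 : ((w c : ℕ) : ℤ) = ((w' c : ℕ) : ℤ) := by omega
        exact Fin.ext (by exact_mod_cast h2)
      have hsupp : Function.support (fun z =>
          (if (V (i, z)).Nonempty then (1:ℝ≥0∞) else 0) * Q (kk i) ^ (s+t))
          ⊆ Set.range g := by
        intro z hz
        have hne : (V (i, z)).Nonempty := by
          by_contra hcon
          simp [hcon] at hz
        obtain ⟨q, hq⟩ := hne
        have hcoord : ∀ c, |q.1 c - q₀.1 c| ≤ (2⁻¹:ℝ) ^ (kk i) := by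
          intro c
          have hd1 : dist (q.1 c) (q₀.1 c) ≤ dist q.1 q₀.1 := dist_le_pi_dist _ _ c
          have hd2 : dist q.1 q₀.1 ≤ dist q q₀ := by
            rw [Prod.dist_eq]; exact le_max_left _ _
          have hd3 : dist q q₀ ≤ dd i := by
            have he1 : edist q q₀ ≤ Metric.ediam (U i) :=
              EMetric.edist_le_diam_of_mem hq.1 hq₀
            have he2 : edist q q₀ ≤ ENNReal.ofReal (dd i) := le_trans he1 (hdiam_le i)
            rw [edist_dist] at he2
            rwa [ENNReal.ofReal_le_ofReal_iff (le_of_lt (hdd0 i))] at he2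
          rw [← Real.dist_eq]
          exact le_trans hd1 (le_trans hd2 (le_trans hd3 (hF2 i)))
        obtain ⟨e, he⟩ := zOf_close hcoord
        refine ⟨e, ?_⟩
        rw [hgdef]
        have hzq : z = zOf m (kk i) q.1 := eq_zOf_of_mem_cube hq.2
        rw [hzq, he]
      calc ∑' z : Fin m → ℤ,
            (if (V (i, z)).Nonempty then (1:ℝ≥0∞) else 0) * Q (kk i) ^ (s+t)
          = ∑' w : Fin m → Fin 3,
            (if (V (i, g w)).Nonempty then (1:ℝ≥0∞) else 0) * Q (kk i) ^ (s+t) :=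
            (ginj.tsum_eq hsupp).symm
        _ ≤ ∑' _w : Fin m → Fin 3, Q (kk i) ^ (s+t) := by
            refine ENNReal.tsum_le_tsum fun w => ?_
            by_cases hvw : (V (i, g w)).Nonempty <;> simp [hvw]
        _ = (3:ℝ≥0∞)^m * Q (kk i) ^ (s+t) := by
            rw [tsum_fintype, Finset.sum_const, nsmul_eq_mul]
            congr 1
            simp [Fintype.card_fun]
        _ = (3:ℝ≥0∞)^m * (if (U i).Nonempty then Q (kk i) ^ (s+t) else 0) := by
            rw [if_pos ⟨q₀, hq₀⟩]
    · have hz0 : ∀ z : Fin m → ℤ,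
          (if (V (i, z)).Nonempty then (1:ℝ≥0∞) else 0) * Q (kk i) ^ (s+t) = 0 := by
        intro z
        have : ¬ (V (i, z)).Nonempty := by
          intro hcon; exact hUi ⟨hcon.choose, hcon.choose_spec.1⟩
        simp [this]
      rw [tsum_congr hz0, tsum_zero]
      exact zero_le
  have h6b : ∀ i : ℕ, (if (U i).Nonempty then Q (kk i) ^ (s+t) else 0)
      ≤ (2:ℝ≥0∞) ^ (s+t) * ((⨆ _ : (U i).Nonempty, Metric.ediam (U i) ^ (s+t))
        + ENNReal.ofReal (η i) ^ (s+t)) := by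
    intro i
    by_cases hUi : (U i).Nonempty
    · rw [if_pos hUi, iSup_pos hUi]
      have h1 : Q (kk i) ≤ 2 * ENNReal.ofReal (dd i) := by
        rw [hQdef]
        have h2 : (2⁻¹:ℝ) ^ (kk i) = 2 * (2⁻¹:ℝ) ^ (kk i + 1) := by
          rw [pow_succ]; ring
        have h3 : (2⁻¹:ℝ) ^ (kk i) ≤ 2 * dd i := by
          rw [h2]; nlinarith [hF1 i]
        calc ENNReal.ofReal ((2⁻¹:ℝ) ^ (kk i)) ≤ ENNReal.ofReal (2 * dd i) :=
              ENNReal.ofReal_le_ofReal h3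
          _ = 2 * ENNReal.ofReal (dd i) := by
              rw [ENNReal.ofReal_mul (by norm_num)]
              norm_num
      have h4 : Q (kk i) ^ (s+t) ≤ (2:ℝ≥0∞) ^ (s+t) * ENNReal.ofReal (dd i) ^ (s+t) := by
        calc Q (kk i) ^ (s+t) ≤ (2 * ENNReal.ofReal (dd i)) ^ (s+t) :=
              ENNReal.rpow_le_rpow h1 (le_of_lt hst)
          _ = (2:ℝ≥0∞) ^ (s+t) * ENNReal.ofReal (dd i) ^ (s+t) :=
              ENNReal.mul_rpow_of_nonneg _ _ (le_of_lt hst)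
      refine le_trans h4 (mul_le_mul_right ?_ _)
      rcases le_total ((Metric.ediam (U i)).toReal) (η i) with hmax | hmax
      · have : dd i = η i := max_eq_right hmax
        rw [this]
        exact self_le_add_left _ _
      · have : dd i = (Metric.ediam (U i)).toReal := max_eq_left hmax
        rw [this, ENNReal.ofReal_toReal (hUtop i)]
        exact self_le_add_right _ _
    · rw [if_neg hUi]
      exact zero_le
  -- grand assembly
  have hmain : content (s + ε) (by linarith) Bset
      ≤ ENNReal.ofReal C₂ * ((3:ℝ≥0∞)^m * ((2:ℝ≥0∞) ^ (s+t) *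
        ((∑' i, ⨆ _ : (U i).Nonempty, Metric.ediam (U i) ^ (s + t)) +
          ENNReal.ofReal εr))) := by
    calc content (s + ε) (by linarith) Bset
        ≤ ∑' k, content (s + ε) (by linarith) (Bt k) := by
          refine le_trans (measure_mono hpigeon) ?_
          exact measure_iUnion_le _
      _ ≤ ∑' k, ENNReal.ofReal C₂ * (Q k ^ (s+t) * Mtot k) := by
          refine ENNReal.tsum_le_tsum fun k => ?_
          refine le_trans (hheavy k) ?_
          have hsplit : 2 * (θ k)⁻¹ * Q k ^ (s + ε) * Q k ^ t * Mtot k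
              = (2 * (θ k)⁻¹ * Q k ^ ε) * (Q k ^ (s+t) * Mtot k) := by
            have e1 : Q k ^ (s + ε) = Q k ^ ε * Q k ^ s := by
              rw [← ENNReal.rpow_add ε s (hQ0 k) (hQtop k), add_comm]
            have e2 : Q k ^ s * Q k ^ t = Q k ^ (s+t) :=
              (ENNReal.rpow_add s t (hQ0 k) (hQtop k)).symm
            rw [e1, ← e2]; ring
          rw [hsplit]
          exact mul_le_mul_left (h2θ k) _
      _ = ENNReal.ofReal C₂ * ∑' k, Q k ^ (s+t) * Mtot k := ENNReal.tsum_mul_left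
      _ = ENNReal.ofReal C₂ * ∑' p : ℕ × (Fin m → ℤ),
            (if (V p).Nonempty then (1:ℝ≥0∞) else 0) * Q (kk p.1) ^ (s+t) := by
          congr 1
          have hre := tsum_regroup
            (fun p : ℕ × (Fin m → ℤ) => if (V p).Nonempty then (1:ℝ≥0∞) else 0)
            (fun p => kk p.1) (fun k => Q k ^ (s+t))
          rw [hre]
          refine tsum_congr fun k => ?_
          congr 1
          rw [hMtotdef]
          refine tsum_congr fun p => ?_
          by_cases h5 : kk p.1 = k <;> by_cases h6 : (V p).Nonempty <;> simp [h5, h6]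
      _ = ENNReal.ofReal C₂ * ∑' i : ℕ, ∑' z : Fin m → ℤ,
            (if (V (i, z)).Nonempty then (1:ℝ≥0∞) else 0) * Q (kk i) ^ (s+t) := by
          congr 1
          exact ENNReal.tsum_prod'
      _ ≤ ENNReal.ofReal C₂ * ∑' i : ℕ,
            (3:ℝ≥0∞)^m * ((2:ℝ≥0∞) ^ (s+t) * ((⨆ _ : (U i).Nonempty,
              Metric.ediam (U i) ^ (s+t)) + ENNReal.ofReal (η i) ^ (s+t))) := by
          refine mul_le_mul_right (ENNReal.tsum_le_tsum fun i => ?_) _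
          exact le_trans (h6a i) (mul_le_mul_right (h6b i) _)
      _ ≤ ENNReal.ofReal C₂ * ((3:ℝ≥0∞)^m * ((2:ℝ≥0∞) ^ (s+t) *
            ((∑' i, ⨆ _ : (U i).Nonempty, Metric.ediam (U i) ^ (s + t)) +
              ENNReal.ofReal εr))) := by
          refine mul_le_mul_right ?_ _
          rw [ENNReal.tsum_mul_left]
          refine mul_le_mul_right ?_ _
          rw [ENNReal.tsum_mul_left]
          refine mul_le_mul_right ?_ _
          rw [ENNReal.tsum_add]
          exact add_le_add le_rfl hηsum
  refine le_trans hmain ?_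
  have hfin : ENNReal.ofReal C₂ ≤ ENNReal.ofReal C₂ + 1 := le_self_add
  calc ENNReal.ofReal C₂ * ((3:ℝ≥0∞)^m * ((2:ℝ≥0∞) ^ (s+t) *
        ((∑' i, ⨆ _ : (U i).Nonempty, Metric.ediam (U i) ^ (s + t)) +
          ENNReal.ofReal εr)))
      = ENNReal.ofReal C₂ * (3:ℝ≥0∞)^m * (2:ℝ≥0∞) ^ (s+t) *
        ((∑' i, ⨆ _ : (U i).Nonempty, Metric.ediam (U i) ^ (s + t)) +
          ENNReal.ofReal εr) := by ring
    _ ≤ (ENNReal.ofReal C₂ + 1) * (3:ℝ≥0∞)^m * (2:ℝ≥0∞) ^ (s+t) *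
        ((∑' i, ⨆ _ : (U i).Nonempty, Metric.ediam (U i) ^ (s + t)) +
          ENNReal.ofReal εr) :=
        mul_le_mul_left (mul_le_mul_left (mul_le_mul_left hfin _) _) _


/-- The Fubini-type slicing theorem in a product of Euclidean-like spaces. -/
theorem slicing {m n : ℕ} (S : Set ((Fin m → ℝ) × (Fin n → ℝ))) (B : Set (Fin m → ℝ))
    (γ₁ γ₂ : ℝ) (hγ₁ : 0 < γ₁) (hγ₂ : 0 < γ₂)
    (hB : ENNReal.ofReal γ₁ ≤ dimH B)
    (hsl : ∀ b ∈ B, ENNReal.ofReal γ₂ ≤ dimH {y | (b, y) ∈ S}) :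
    ENNReal.ofReal (γ₁ + γ₂) ≤ dimH S := by
  classical
  refine ENNReal.le_of_forall_nnreal_lt fun u hu => ?_
  have hu' : (u:ℝ) < γ₁ + γ₂ := by
    by_contra hcon
    push_neg at hcon
    exact absurd (lt_of_lt_of_le hu (by
      rw [← ENNReal.ofReal_coe_nnreal]
      exact ENNReal.ofReal_le_ofReal hcon)) (lt_irrefl _)
  set δ0 : ℝ := min ((γ₁ + γ₂ - u)/4) (min (γ₁/4) (γ₂/4)) with hδ0def
  have hδ0 : 0 < δ0 := by
    refine lt_min (by linarith) (lt_min (by linarith) (by linarith))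
  have hδ0a : δ0 ≤ (γ₁ + γ₂ - u)/4 := min_le_left _ _
  have hδ0b : δ0 ≤ γ₁/4 := le_trans (min_le_right _ _) (min_le_left _ _)
  have hδ0c : δ0 ≤ γ₂/4 := le_trans (min_le_right _ _) (min_le_right _ _)
  set t : ℝ := γ₂ - δ0 with htdef
  set s : ℝ := γ₁ - 2*δ0 with hsdef
  set ε : ℝ := δ0 with hεdef
  have ht : 0 < t := by rw [htdef]; linarith
  have hs : 0 < s := by rw [hsdef]; linarith
  have hε : 0 < ε := hδ0
  have hst : 0 < s + t := by linarith
  have hs'lt : s + ε < γ₁ := by rw [hsdef, hεdef]; linarith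
  have ht'lt : t < γ₂ := by rw [htdef]; linarith
  have hust : (u:ℝ) ≤ s + t := by rw [hsdef, htdef]; linarith
  -- all slices have infinite μH[t]
  have hslinf : ∀ b ∈ B, μH[t] {y | (b, y) ∈ S} = ⊤ := by
    intro b hb
    have h1 : ((t.toNNReal : ℝ≥0∞)) < dimH {y | (b, y) ∈ S} := by
      refine lt_of_lt_of_le ?_ (hsl b hb)
      have : (t.toNNReal : ℝ≥0∞) = ENNReal.ofReal t := rfl
      rw [this]
      exact (ENNReal.ofReal_lt_ofReal_iff hγ₂).mpr ht'lt
    have h2 := hausdorffMeasure_of_lt_dimH h1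
    rwa [Real.coe_toNNReal t (le_of_lt ht)] at h2
  -- the uniformized pieces of B
  set Bn : ℕ → Set (Fin m → ℝ) := fun j => {b ∈ B | ∀ W : ℕ → Set (Fin n → ℝ),
    {y | (b, y) ∈ S} ⊆ (⋃ i, W i) →
    (∀ i, Metric.ediam (W i) ≤ ENNReal.ofReal ((2⁻¹:ℝ) ^ (j+1))) →
    1 ≤ ∑' i, Metric.ediam (W i) ^ t} with hBndef
  have hBsub : B ⊆ ⋃ j, Bn j := by
    intro b hb
    have hinf := hslinf b hb
    rw [Measure.hausdorffMeasure_apply] at hinf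
    have h1 : (1:ℝ≥0∞) < ⨆ (r : ℝ≥0∞) (_ : 0 < r),
        ⨅ (W : ℕ → Set (Fin n → ℝ)) (_ : {y | (b, y) ∈ S} ⊆ ⋃ i, W i)
          (_ : ∀ i, Metric.ediam (W i) ≤ r),
          ∑' i, ⨆ _ : (W i).Nonempty, Metric.ediam (W i) ^ t := by
      rw [hinf]; exact ENNReal.one_lt_top
    obtain ⟨r, hr⟩ := lt_iSup_iff.mp h1
    have hr0 : 0 < r := by
      by_contra hcon
      rw [iSup_neg hcon] at hr
      exact absurd hr (by simp)
    rw [iSup_pos hr0] at hr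
    obtain ⟨q, hq⟩ := ENNReal.exists_inv_nat_lt (ne_of_gt hr0)
    have hρr : ENNReal.ofReal ((2⁻¹:ℝ) ^ (q+1)) ≤ r := by
      rcases Nat.eq_zero_or_pos q with h0 | hq0
      · subst h0
        simp only [Nat.cast_zero, ENNReal.inv_zero] at hq
        exact le_of_lt (lt_of_le_of_lt le_top (by simpa using hq))
      · refine le_trans ?_ (le_of_lt hq)
        have hcast : ((q:ℝ≥0∞))⁻¹ = ENNReal.ofReal ((q:ℝ))⁻¹ := by
          rw [ENNReal.ofReal_inv_of_pos (by exact_mod_cast hq0)]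
          congr 1
          exact (ENNReal.ofReal_natCast q).symm
        rw [hcast]
        refine ENNReal.ofReal_le_ofReal ?_
        have h2q : (q:ℝ) ≤ 2 ^ (q+1) := by
          have := Nat.lt_two_pow_self (n := q)
          have h3 : (q:ℝ) < 2 ^ q := by exact_mod_cast this
          have h4 : (2:ℝ) ^ q ≤ 2 ^ (q+1) := by
            apply pow_le_pow_right₀ (by norm_num) (by omega)
          linarith
        rw [inv_pow, ← one_div, ← one_div]
        apply div_le_div_of_nonneg_left (by norm_num) (by exact_mod_cast hq0) h2q
    refine mem_iUnion.mpr ⟨q, hb, fun W hWc hWd => ?_⟩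
    have hle : (⨅ (W : ℕ → Set (Fin n → ℝ)) (_ : {y | (b, y) ∈ S} ⊆ ⋃ i, W i)
          (_ : ∀ i, Metric.ediam (W i) ≤ r),
          ∑' i, ⨆ _ : (W i).Nonempty, Metric.ediam (W i) ^ t)
        ≤ ∑' i, ⨆ _ : (W i).Nonempty, Metric.ediam (W i) ^ t := by
      refine iInf_le_of_le W (iInf_le_of_le hWc (iInf_le _ ?_))
      exact fun i => le_trans (hWd i) hρr
    refine le_of_lt (lt_of_lt_of_le hr (le_trans hle ?_))
    exact ENNReal.tsum_le_tsum fun i => iSup_le fun _ => le_rfl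
  -- B has infinite Hausdorff measure in dimension s+ε, hence nonzero content
  have hμB : μH[s+ε] B = ⊤ := by
    have h1 : (((s+ε).toNNReal : ℝ≥0∞)) < dimH B := by
      refine lt_of_lt_of_le ?_ hB
      have : ((s+ε).toNNReal : ℝ≥0∞) = ENNReal.ofReal (s+ε) := rfl
      rw [this]
      exact (ENNReal.ofReal_lt_ofReal_iff hγ₁).mpr hs'lt
    have h2 := hausdorffMeasure_of_lt_dimH h1
    rwa [Real.coe_toNNReal _ (by linarith)] at h2
  have hspos : 0 < s + ε := by linarith
  have hcB : content (s+ε) hspos B ≠ 0 :=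
    content_ne_zero hspos (by rw [hμB]; exact ENNReal.top_ne_zero)
  have hcsub : content (s+ε) hspos B ≤ ∑' j, content (s+ε) hspos (Bn j) :=
    le_trans (measure_mono hBsub) (measure_iUnion_le _)
  have hex : ∃ j, content (s+ε) hspos (Bn j) ≠ 0 := by
    by_contra hcon
    push_neg at hcon
    apply hcB
    refine le_antisymm ?_ (zero_le)
    refine le_trans hcsub ?_
    rw [tsum_congr hcon, tsum_zero]
  obtain ⟨j, hj⟩ := hex
  obtain ⟨CC, hCC0, hCCtop, hCB⟩ := cover_bound m n t s ε ht hs hε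
  -- μH[s+t] S is nonzero
  have hμS : μH[((s+t).toNNReal : ℝ)] S ≠ 0 := by
    rw [Real.coe_toNNReal _ (le_of_lt hst)]
    intro h0
    rw [Measure.hausdorffMeasure_apply] at h0
    have hterm : (⨅ (U : ℕ → Set ((Fin m → ℝ) × (Fin n → ℝ))) (_ : S ⊆ ⋃ i, U i)
        (_ : ∀ i, Metric.ediam (U i) ≤ ENNReal.ofReal ((2⁻¹:ℝ) ^ (j+1))),
        ∑' i, ⨆ _ : (U i).Nonempty, Metric.ediam (U i) ^ (s+t)) = 0 := by
      refine le_antisymm ?_ (zero_le)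
      rw [← h0]
      refine le_iSup₂ (f := fun (r : ℝ≥0∞) (_ : 0 < r) =>
        ⨅ (U : ℕ → Set ((Fin m → ℝ) × (Fin n → ℝ))) (_ : S ⊆ ⋃ i, U i)
          (_ : ∀ i, Metric.ediam (U i) ≤ r),
          ∑' i, ⨆ _ : (U i).Nonempty, Metric.ediam (U i) ^ (s+t))
        (ENNReal.ofReal ((2⁻¹:ℝ) ^ (j+1))) ?_
      rw [ENNReal.ofReal_pos]
      positivity
    set c1 : ℝ≥0∞ := min (content (s+ε) hspos (Bn j)) 1 with hc1def
    have hc10 : c1 ≠ 0 :=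
      (lt_min (pos_iff_ne_zero.mpr hj) zero_lt_one).ne'
    have hc1top : c1 ≠ ⊤ := by
      refine ne_top_of_le_ne_top ENNReal.one_ne_top (min_le_right _ _)
    set χ : ℝ≥0∞ := c1 * (4 * CC)⁻¹ with hχdef
    have hχ0 : χ ≠ 0 := by
      refine mul_ne_zero hc10 ?_
      rw [ne_eq, ENNReal.inv_eq_zero]
      exact ENNReal.mul_ne_top (by norm_num) hCCtop
    have hχtop : χ ≠ ⊤ := by
      refine ENNReal.mul_ne_top hc1top ?_
      rw [ne_eq, ENNReal.inv_eq_top]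
      intro hcon
      rw [mul_eq_zero] at hcon
      rcases hcon with h | h
      · norm_num at h
      · exact hCC0 h
    have hlt : (⨅ (U : ℕ → Set ((Fin m → ℝ) × (Fin n → ℝ))) (_ : S ⊆ ⋃ i, U i)
        (_ : ∀ i, Metric.ediam (U i) ≤ ENNReal.ofReal ((2⁻¹:ℝ) ^ (j+1))),
        ∑' i, ⨆ _ : (U i).Nonempty, Metric.ediam (U i) ^ (s+t)) < χ := by
      rw [hterm]
      exact pos_iff_ne_zero.mpr hχ0
    obtain ⟨U, hU⟩ := iInf_lt_iff.mp hlt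
    obtain ⟨hU1, hU2⟩ := iInf_lt_iff.mp hU
    obtain ⟨hU3, hU4⟩ := iInf_lt_iff.mp hU2
    -- apply the covering bound
    have hBn' : ∀ b ∈ Bn j, ∀ W : ℕ → Set (Fin n → ℝ), {y | (b, y) ∈ S} ⊆ (⋃ i, W i) →
        (∀ i, Metric.ediam (W i) ≤ ENNReal.ofReal ((2⁻¹:ℝ) ^ (j+1))) →
        1 ≤ ∑' i, Metric.ediam (W i) ^ t := fun b hb => hb.2
    have happ := hCB S (Bn j) j hBn' U hU1 hU3 χ.toReal
      (ENNReal.toReal_pos hχ0 hχtop)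
    rw [ENNReal.ofReal_toReal hχtop] at happ
    have hfin : content (s+ε) hspos (Bn j) ≤ c1 * 2⁻¹ := by
      refine le_trans happ ?_
      calc CC * ((∑' i, ⨆ _ : (U i).Nonempty, Metric.ediam (U i) ^ (s + t)) + χ)
          ≤ CC * (χ + χ) := mul_le_mul_right (add_le_add (le_of_lt hU4) le_rfl) _
        _ = c1 * (CC * 2 * (4 * CC)⁻¹) := by rw [hχdef]; ring
        _ = c1 * 2⁻¹ := by
            congr 1
            rw [ENNReal.mul_inv (Or.inl (by norm_num)) (Or.inl (by norm_num))]
            calc CC * 2 * (4⁻¹ * CC⁻¹) = (CC * CC⁻¹) * (2 * 4⁻¹) := by ring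
              _ = 2 * 4⁻¹ := by rw [ENNReal.mul_inv_cancel hCC0 hCCtop, one_mul]
              _ = 2⁻¹ := by
                  rw [show (4:ℝ≥0∞) = 2 * 2 by norm_num,
                    ENNReal.mul_inv (Or.inl (by norm_num)) (Or.inl (by norm_num)),
                    ← mul_assoc, ENNReal.mul_inv_cancel (by norm_num) (by norm_num), one_mul]
    have hup : c1 ≤ content (s+ε) hspos (Bn j) := min_le_left _ _
    have : c1 ≤ c1 * 2⁻¹ := le_trans hup hfin
    have hhalf : c1 * 2⁻¹ < c1 := by
      rw [mul_comm, ← ENNReal.div_eq_inv_mul]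
      exact ENNReal.half_lt_self hc10 hc1top
    exact absurd (lt_of_le_of_lt this hhalf) (lt_irrefl _)
  have hdim := le_dimH_of_hausdorffMeasure_ne_zero hμS
  refine le_trans ?_ hdim
  rw [ENNReal.coe_le_coe]
  have hcoe : u = (u:ℝ).toNNReal := Real.toNNReal_coe.symm
  rw [hcoe]
  exact Real.toNNReal_le_toNNReal hust


/-- The unglue map `ℝ⁵ → ℝ³ × ℝ²`. -/
noncomputable def Phi : (Fin 5 → ℝ) → (Fin 3 → ℝ) × (Fin 2 → ℝ) :=
  fun v => (![v 0, v 1, v 2], ![v 3, v 4])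

lemma lipschitz_Phi : LipschitzWith 1 Phi := by
  have h1 : LipschitzWith 1 (fun v : Fin 5 → ℝ => ![v 0, v 1, v 2]) := by
    refine LipschitzWith.of_dist_le_mul fun u v => ?_
    rw [NNReal.coe_one, one_mul, dist_pi_le_iff dist_nonneg]
    intro b
    fin_cases b <;> simpa using dist_le_pi_dist u v _
  have h2 : LipschitzWith 1 (fun v : Fin 5 → ℝ => ![v 3, v 4]) := by
    refine LipschitzWith.of_dist_le_mul fun u v => ?_
    rw [NNReal.coe_one, one_mul, dist_pi_le_iff dist_nonneg]
    intro b
    fin_cases b <;> simpa using dist_le_pi_dist u v _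
  have := h1.prodMk h2
  unfold Phi
  simpa using this


end Stmt16Aux

open Stmt16Aux in
/-- Gluing a pinned triangle and a pinned 2-chain into a kite: if some `x ∈ E₁` pins a
triangle edge-length set of dimension `≥ γ₁` in `E₁`, and every `y₁ ∈ E₁` pins a 2-chain
edge-length set of dimension `≥ γ₂` in `E₂`, then some `x ∈ E` pins a kite edge-length
set in `ℝ⁵` of dimension `≥ γ₁ + γ₂`. -/
theorem stmt_16 (d : ℕ) (hd : 1 ≤ d)
    (E E₁ E₂ : Set (EuclideanSpace ℝ (Fin d))) (hE : IsCompact E)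
    (hE1 : E₁ ⊆ E) (hE2 : E₂ ⊆ E) (hdisj : Disjoint E₁ E₂)
    (μ : Measure (EuclideanSpace ℝ (Fin d)))
    (hμfin : IsFiniteMeasure μ) (hμsupp : μ Eᶜ = 0)
    (hfrost : ∃ s Cf : ℝ, 0 < s ∧ 0 < Cf ∧ ∀ (x : EuclideanSpace ℝ (Fin d)) (r : ℝ),
      0 < r → μ (Metric.ball x r) ≤ ENNReal.ofReal (Cf * r ^ s))
    (hμ1 : 0 < μ E₁) (hμ2 : 0 < μ E₂)
    (γ₁ γ₂ : ℝ) (hγ₁ : 0 < γ₁) (hγ₂ : 0 < γ₂)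
    (htri : ∃ x ∈ E₁, ENNReal.ofReal γ₁ ≤
      dimH {v : Fin 3 → ℝ | ∃ y₁ ∈ E₁, ∃ y₂ ∈ E₁,
        x ≠ y₁ ∧ x ≠ y₂ ∧ y₁ ≠ y₂ ∧ v = ![dist x y₁, dist y₁ y₂, dist y₂ x]})
    (hchain : ∀ y₁ ∈ E₁, ENNReal.ofReal γ₂ ≤
      dimH {v : Fin 2 → ℝ | ∃ y₃ ∈ E₂, ∃ y₄ ∈ E₂,
        y₃ ≠ y₄ ∧ v = ![dist y₁ y₃, dist y₃ y₄]}) :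
    ∃ x ∈ E, ENNReal.ofReal (γ₁ + γ₂) ≤
      dimH {v : Fin 5 → ℝ | ∃ y₁ ∈ E, ∃ y₂ ∈ E, ∃ y₃ ∈ E, ∃ y₄ ∈ E,
        List.Pairwise (· ≠ ·) [x, y₁, y₂, y₃, y₄] ∧
        v = ![dist x y₁, dist y₁ y₂, dist y₂ x, dist y₁ y₃, dist y₃ y₄]} := by
  classical
  obtain ⟨x, hx, hdimA⟩ := htri
  refine ⟨x, hE1 hx, ?_⟩
  set K : Set (Fin 5 → ℝ) := {v : Fin 5 → ℝ | ∃ y₁ ∈ E, ∃ y₂ ∈ E, ∃ y₃ ∈ E, ∃ y₄ ∈ E,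
    List.Pairwise (· ≠ ·) [x, y₁, y₂, y₃, y₄] ∧
    v = ![dist x y₁, dist y₁ y₂, dist y₂ x, dist y₁ y₃, dist y₃ y₄]} with hKdef
  set A : Set (Fin 3 → ℝ) := {v : Fin 3 → ℝ | ∃ y₁ ∈ E₁, ∃ y₂ ∈ E₁,
    x ≠ y₁ ∧ x ≠ y₂ ∧ y₁ ≠ y₂ ∧ v = ![dist x y₁, dist y₁ y₂, dist y₂ x]} with hAdef
  set S : Set ((Fin 3 → ℝ) × (Fin 2 → ℝ)) := Phi '' K with hSdef
  have hne : ∀ {a b : EuclideanSpace ℝ (Fin d)}, a ∈ E₁ → b ∈ E₂ → a ≠ b := by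
    intro a b ha hb hab
    exact Set.disjoint_left.mp hdisj ha (hab ▸ hb)
  have hsl : ∀ b ∈ A, ENNReal.ofReal γ₂ ≤ dimH {w | (b, w) ∈ S} := by
    intro b hbA
    obtain ⟨y₁, hy₁, y₂, hy₂, hxy₁, hxy₂, hy₁₂, hbeq⟩ := hbA
    refine le_trans (hchain y₁ hy₁) (dimH_mono ?_)
    intro w hw
    obtain ⟨y₃, hy₃, y₄, hy₄, hy₃₄, hweq⟩ := hw
    set v5 : Fin 5 → ℝ := ![b 0, b 1, b 2, w 0, w 1] with hv5def
    have hv5K : v5 ∈ K := by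
      refine ⟨y₁, hE1 hy₁, y₂, hE1 hy₂, y₃, hE2 hy₃, y₄, hE2 hy₄, ?_, ?_⟩
      · simp only [List.pairwise_cons, List.mem_cons, List.mem_singleton,
          List.not_mem_nil, List.Pairwise.nil]
        refine ⟨?_, ?_, ?_, ?_⟩
        · intro a ha
          rcases ha with rfl | rfl | rfl | rfl | h
          · exact hxy₁
          · exact hxy₂
          · exact hne hx hy₃
          · exact hne hx hy₄
          · exact h.elim
        · intro a ha
          rcases ha with rfl | rfl | rfl | h
          · exact hy₁₂
          · exact hne hy₁ hy₃
          · exact hne hy₁ hy₄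
          · exact h.elim
        · intro a ha
          rcases ha with rfl | rfl | h
          · exact hne hy₂ hy₃
          · exact hne hy₂ hy₄
          · exact h.elim
        · constructor
          · intro a ha
            rcases ha with rfl | h
            · exact hy₃₄
            · exact h.elim
          · exact ⟨fun a h => h.elim, by trivial⟩
      · funext i
        fin_cases i <;> simp [hv5def, hbeq, hweq]
    refine ⟨v5, hv5K, ?_⟩
    have h1 : Phi v5 = (b, w) := by
      rw [Phi]
      refine Prod.ext ?_ ?_
      · funext i
        fin_cases i <;> simp [hv5def, hbeq]
      · funext i
        fin_cases i <;> simp [hv5def, hweq]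
    rw [h1]
  have hmain : ENNReal.ofReal (γ₁ + γ₂) ≤ dimH S :=
    slicing S A γ₁ γ₂ hγ₁ hγ₂ hdimA hsl
  refine le_trans hmain ?_
  rw [hSdef]
  exact lipschitz_Phi.dimH_image_le K
end

section
/- (Structure theorem for Lebesgue measure, base-to-chain upgrade.) Let d ≥ 2 and α > 0. Suppose that for every pair of compact sets E_1, E_2 ⊂ ℝ^d with positive α-dimensional Hausdorff measure and Frostman probability measures μ_1, μ_2 (satisfying μ_i(B(x,r)) ≲ r^α), one has μ_2({x ∈ E_2 : |Δ_x(E_1)|_1 > 0}) > 0, where Δ_x(E) = {|x−y| : y ∈ E}. Then for every integer k ≥ 1 and every such pair E_1, E_2, one has μ_2({x ∈ E_2 : |S^k_x(E_1)|_k > 0}) > 0, where S^k_x(E) is the set of k-tuples (|x−x_1|, |x_1−x_2|, …, |x_{k−1}−x_k|) over distinct points x, x_1, …, x_k ∈ E, and |·|_k denotes k-dimensional Lebesgue measure. -/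
open MeasureTheory ENNReal

/-- The pinned distance set `Δ_x(E) = {|x − y| : y ∈ E}`. -/
def PDist {d : ℕ} (x : EuclideanSpace ℝ (Fin d)) (E : Set (EuclideanSpace ℝ (Fin d))) :
    Set ℝ :=
  {t | ∃ y ∈ E, t = dist x y}

/-- The pinned non-degenerate `k`-chain edge-length set
`S^k_x(E) = {(|x−x₁|, |x₁−x₂|, …, |x_{k−1}−x_k|) : x, x₁, …, x_k ∈ E distinct}`. -/
def SkPinned {d : ℕ} (k : ℕ) (x : EuclideanSpace ℝ (Fin d))
    (E : Set (EuclideanSpace ℝ (Fin d))) : Set (Fin k → ℝ) :=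
  {v | ∃ p : Fin (k + 1) → EuclideanSpace ℝ (Fin d), p 0 = x ∧
    (∀ j : Fin k, p j.succ ∈ E) ∧ Function.Injective p ∧
    ∀ j : Fin k, v j = dist (p j.castSucc) (p j.succ)}

/-- A Frostman probability measure for exponent `α` on `E`: a Borel probability measure
supported on `E` with `μ(B(x,r)) ≲ r^α`. -/
def Frostman {d : ℕ} (α : ℝ) (E : Set (EuclideanSpace ℝ (Fin d)))
    (μ : Measure (EuclideanSpace ℝ (Fin d))) : Prop :=
  IsProbabilityMeasure μ ∧ μ Eᶜ = 0 ∧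
    ∃ Cf : ℝ, 0 < Cf ∧ ∀ (x : EuclideanSpace ℝ (Fin d)) (r : ℝ), 0 < r →
      μ (Metric.ball x r) ≤ ENNReal.ofReal (Cf * r ^ α)



private lemma tendsto_ofReal_aux (Cf D α : ℝ) (hα : 0 < α) :
    Filter.Tendsto (fun η : ℝ => ENNReal.ofReal (Cf * (D + η) ^ α)) (nhdsWithin 0 (Set.Ioi 0))
      (nhds (ENNReal.ofReal (Cf * D ^ α))) := by
  have hc : ContinuousAt (fun η : ℝ => Cf * (D + η) ^ α) 0 := by
    apply ContinuousAt.mul continuousAt_const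
    have h1 : ContinuousAt (fun η : ℝ => D + η) 0 := by fun_prop
    have h2 : ContinuousAt (fun x : ℝ => x ^ α) (D + 0) :=
      Real.continuousAt_rpow_const _ _ (Or.inr hα.le)
    exact h2.comp h1
  have h3 := (ENNReal.continuous_ofReal.continuousAt).comp hc
  have h4 := h3.tendsto.mono_left (nhdsWithin_le_nhds (s := Set.Ioi (0:ℝ)))
  simpa [Function.comp_def, add_zero] using h4

private lemma frostman_bound {d : ℕ} {α : ℝ} (hα : 0 < α) {Cf : ℝ} (hCf : 0 < Cf)
    {μ : Measure (EuclideanSpace ℝ (Fin d))}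
    (hb : ∀ x r, 0 < r → μ (Metric.ball x r) ≤ ENNReal.ofReal (Cf * r ^ α))
    (s : Set (EuclideanSpace ℝ (Fin d))) :
    μ s ≤ ENNReal.ofReal Cf * EMetric.diam s ^ α := by
  rcases Set.eq_empty_or_nonempty s with rfl | ⟨x, hx⟩
  · simp
  by_cases hdiam : EMetric.diam s = ∞
  · rw [hdiam, ENNReal.top_rpow_of_pos hα, ENNReal.mul_top (by simp [hCf])]
    exact le_top
  have hbdd : Bornology.IsBounded s := by
    rw [Metric.isBounded_iff_ediam_ne_top]; exact hdiam
  set D := Metric.diam s with hD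
  have hD0 : 0 ≤ D := Metric.diam_nonneg
  have hsub : ∀ η : ℝ, 0 < η → s ⊆ Metric.ball x (D + η) := by
    intro η hη y hy
    exact Metric.mem_ball.2 (lt_of_le_of_lt (Metric.dist_le_diam_of_mem hbdd hy hx)
      (by linarith))
  have hle : ∀ η : ℝ, 0 < η → μ s ≤ ENNReal.ofReal (Cf * (D + η) ^ α) := fun η hη =>
    le_trans (measure_mono (hsub η hη)) (hb x (D + η) (by linarith))
  have hmu : μ s ≤ ENNReal.ofReal (Cf * D ^ α) :=
    ge_of_tendsto (tendsto_ofReal_aux Cf D α hα)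
      (Filter.eventually_of_mem self_mem_nhdsWithin fun η hη => hle η hη)
  calc μ s ≤ ENNReal.ofReal (Cf * D ^ α) := hmu
    _ = ENNReal.ofReal Cf * ENNReal.ofReal D ^ α := by
        rw [ENNReal.ofReal_mul hCf.le, ENNReal.ofReal_rpow_of_nonneg hD0 hα.le]
    _ = ENNReal.ofReal Cf * EMetric.diam s ^ α := by
        rw [hD, Metric.diam, ENNReal.ofReal_toReal (show Metric.ediam s ≠ ∞ from hdiam)]; rfl

private lemma pos_hausdorff {d : ℕ} {α : ℝ} (hα : 0 < α)
    {E : Set (EuclideanSpace ℝ (Fin d))} {μ : Measure (EuclideanSpace ℝ (Fin d))}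
    (hμ : Frostman α E μ) {A : Set (EuclideanSpace ℝ (Fin d))} (hA : 0 < μ A) :
    0 < μH[α] A := by
  obtain ⟨hp, hc, Cf, hCf, hb⟩ := hμ
  have h0 : (ENNReal.ofReal Cf) ≠ 0 := by simp [hCf]
  have ht : (ENNReal.ofReal Cf) ≠ ∞ := ENNReal.ofReal_ne_top
  have hle : (ENNReal.ofReal Cf)⁻¹ • μ ≤ μH[α] := by
    apply MeasureTheory.Measure.le_hausdorffMeasure α _ 1 one_pos
    intro s _
    rw [Measure.smul_apply, smul_eq_mul]
    calc (ENNReal.ofReal Cf)⁻¹ * μ s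
        ≤ (ENNReal.ofReal Cf)⁻¹ * (ENNReal.ofReal Cf * EMetric.diam s ^ α) :=
          mul_le_mul_right (frostman_bound hα hCf hb s) _
      _ = EMetric.diam s ^ α := by rw [← mul_assoc, ENNReal.inv_mul_cancel h0 ht, one_mul]
  have h1 : (ENNReal.ofReal Cf)⁻¹ * μ A ≤ μH[α] A := by
    have := Measure.le_iff'.1 hle A
    simpa [Measure.smul_apply, smul_eq_mul] using this
  have h2 : 0 < (ENNReal.ofReal Cf)⁻¹ * μ A :=
    ENNReal.mul_pos (by simp [ENNReal.inv_ne_zero, ht]) hA.ne'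
  exact lt_of_lt_of_le h2 h1

private lemma frostman_restrict {d : ℕ} {α : ℝ}
    {E : Set (EuclideanSpace ℝ (Fin d))} {μ : Measure (EuclideanSpace ℝ (Fin d))}
    (hμ : Frostman α E μ) {K : Set (EuclideanSpace ℝ (Fin d))} (hK : MeasurableSet K)
    (hK0 : 0 < μ K) : Frostman α K ((μ K)⁻¹ • μ.restrict K) := by
  obtain ⟨hp, hc, Cf, hCf, hb⟩ := hμ
  haveI := hp
  have hKtop : μ K ≠ ∞ := (measure_lt_top μ K).ne
  have hKne : μ K ≠ 0 := hK0.ne'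
  set c : ℝ := (μ K).toReal with hcdef
  have hc0 : 0 < c := ENNReal.toReal_pos hKne hKtop
  have hcK : μ K = ENNReal.ofReal c := by rw [hcdef, ENNReal.ofReal_toReal hKtop]
  refine ⟨⟨?_⟩, ?_, c⁻¹ * Cf, by positivity, ?_⟩
  · rw [Measure.smul_apply, Measure.restrict_apply MeasurableSet.univ, Set.univ_inter,
      smul_eq_mul, ENNReal.inv_mul_cancel hKne hKtop]
  · rw [Measure.smul_apply, Measure.restrict_apply hK.compl, Set.compl_inter_self]
    simp
  · intro x r hr
    rw [Measure.smul_apply, smul_eq_mul, Measure.restrict_apply' hK]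
    calc (μ K)⁻¹ * μ (Metric.ball x r ∩ K)
        ≤ (μ K)⁻¹ * ENNReal.ofReal (Cf * r ^ α) := by
          exact mul_le_mul_right (le_trans (measure_mono Set.inter_subset_left) (hb x r hr)) _
      _ = ENNReal.ofReal (c⁻¹ * Cf * r ^ α) := by
          rw [hcK, ← ENNReal.ofReal_inv_of_pos hc0, ← ENNReal.ofReal_mul (by positivity)]
          ring_nf


private lemma singleton_null {d : ℕ} {α : ℝ} (hα : 0 < α)
    {μ : Measure (EuclideanSpace ℝ (Fin d))} {Cf : ℝ} (hCf : 0 < Cf)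
    (hb : ∀ (x : EuclideanSpace ℝ (Fin d)) (r : ℝ), 0 < r →
      μ (Metric.ball x r) ≤ ENNReal.ofReal (Cf * r ^ α))
    (x : EuclideanSpace ℝ (Fin d)) : μ {x} = 0 := by
  have hle : ∀ η : ℝ, 0 < η → μ {x} ≤ ENNReal.ofReal (Cf * (0 + η) ^ α) := by
    intro η hη
    refine le_trans (measure_mono ?_) (hb x (0 + η) (by linarith))
    intro y hy
    simp only [Set.mem_singleton_iff] at hy
    simp [hy, Metric.mem_ball, hη]
  have hmu : μ {x} ≤ ENNReal.ofReal (Cf * (0:ℝ) ^ α) :=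
    ge_of_tendsto (tendsto_ofReal_aux Cf 0 α hα)
      (Filter.eventually_of_mem self_mem_nhdsWithin fun η hη => hle η hη)
  simpa [Real.zero_rpow hα.ne'] using hmu

private lemma exists_split {d : ℕ} {α : ℝ} (hα : 0 < α)
    {E : Set (EuclideanSpace ℝ (Fin d))} {μ : Measure (EuclideanSpace ℝ (Fin d))}
    (hE : IsCompact E) (hμ : Frostman α E μ) :
    ∃ A B : Set (EuclideanSpace ℝ (Fin d)), A ⊆ E ∧ B ⊆ E ∧ IsCompact A ∧ IsCompact B ∧
      Disjoint A B ∧ 0 < μ A ∧ 0 < μ B := by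
  obtain ⟨hp, hcomp, Cf, hCf, hb⟩ := hμ
  haveI := hp
  have hμE : μ E = 1 := by
    have h1 : (1:ℝ≥0∞) ≤ μ E + μ Eᶜ := by
      rw [← measure_univ (μ := μ)]
      exact le_trans (measure_mono (by simp)) (measure_union_le E Eᶜ)
    rw [hcomp, add_zero] at h1
    exact le_antisymm prob_le_one h1
  -- a thick point exists
  have hthick : ∃ x₀ ∈ E, ∀ r : ℝ, 0 < r → 0 < μ (Metric.ball x₀ r) := by
    by_contra hcon
    push_neg at hcon
    have hcov : ∀ x ∈ E, ∃ r : ℝ, 0 < r ∧ μ (Metric.ball x r) = 0 := by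
      intro x hx
      obtain ⟨r, hr, hr0⟩ := hcon x hx
      exact ⟨r, hr, le_antisymm hr0 (zero_le)⟩
    choose! r hr hr0 using hcov
    obtain ⟨t, hts, htfin, htcov⟩ := hE.elim_finite_subcover_image
      (fun x (hx : x ∈ E) => Metric.isOpen_ball (x := x) (ε := r x))
      (fun x hx => Set.mem_biUnion hx (Metric.mem_ball_self (hr x hx)))
    have hcov2 : E ⊆ ⋃ i ∈ htfin.toFinset, Metric.ball i (r i) := by
      simpa [Set.Finite.mem_toFinset] using htcov
    have : μ E = 0 := by
      refine le_antisymm (le_trans (measure_mono hcov2) ?_) (zero_le)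
      refine le_trans (measure_biUnion_finset_le _ _) ?_
      rw [Finset.sum_eq_zero fun i hi => hr0 i (hts (htfin.mem_toFinset.1 hi))]
    rw [hμE] at this; exact one_ne_zero this
  obtain ⟨x₀, hx₀E, hx₀⟩ := hthick
  -- closed balls around x₀ shrink to measure 0
  have hsing : μ {x₀} = 0 := singleton_null hα hCf hb x₀
  have htend : Filter.Tendsto (fun n : ℕ => μ (Metric.closedBall x₀ (1 / (n + 1))))
      Filter.atTop (nhds (μ {x₀})) := by
    have h1 : {x₀} = ⋂ n : ℕ, Metric.closedBall x₀ (1 / (n + 1)) := by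
      ext y
      simp only [Set.mem_singleton_iff, Set.mem_iInter, Metric.mem_closedBall]
      constructor
      · rintro rfl n; simp; positivity
      · intro h
        have : dist y x₀ ≤ 0 :=
          ge_of_tendsto tendsto_one_div_add_atTop_nhds_zero_nat
            (Filter.Eventually.of_forall h)
        rw [dist_le_zero] at this; exact this
    rw [h1]
    refine MeasureTheory.tendsto_measure_iInter_atTop (fun n => measurableSet_closedBall.nullMeasurableSet) ?_ ⟨0, (measure_lt_top μ _).ne⟩
    intro m n hmn
    apply Metric.closedBall_subset_closedBall
    have hc : (m:ℝ) ≤ n := by exact_mod_cast hmn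
    gcongr
  rw [hsing] at htend
  obtain ⟨n, hn⟩ : ∃ n : ℕ, μ (Metric.closedBall x₀ (1 / (n + 1))) < 1 := by
    have := htend.eventually_lt_const (by norm_num : (0:ℝ≥0∞) < 1)
    exact this.exists
  set r' : ℝ := 1 / (n + 1) with hr'def
  have hr'pos : 0 < r' := by positivity
  refine ⟨E ∩ Metric.closedBall x₀ (r'/2), E \ Metric.ball x₀ r', Set.inter_subset_left,
    Set.diff_subset, hE.inter_right Metric.isClosed_closedBall,
    hE.diff Metric.isOpen_ball, ?_, ?_, ?_⟩
  · refine Set.disjoint_left.2 fun y hy hy2 => ?_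
    have h1 : dist y x₀ ≤ r' / 2 := hy.2
    have h2 : ¬ dist y x₀ < r' := fun h => hy2.2 (Metric.mem_ball.2 h)
    push_neg at h2
    linarith
  · have hball : μ (Metric.ball x₀ (r'/2)) ≤ μ (E ∩ Metric.closedBall x₀ (r'/2)) := by
      have : Metric.ball x₀ (r'/2) ⊆ (E ∩ Metric.closedBall x₀ (r'/2)) ∪ Eᶜ := by
        intro y hy
        by_cases hyE : y ∈ E
        · exact Or.inl ⟨hyE, Metric.ball_subset_closedBall hy⟩
        · exact Or.inr hyE
      calc μ (Metric.ball x₀ (r'/2)) ≤ μ ((E ∩ Metric.closedBall x₀ (r'/2)) ∪ Eᶜ) := measure_mono this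
        _ ≤ μ (E ∩ Metric.closedBall x₀ (r'/2)) + μ Eᶜ := measure_union_le _ _
        _ = μ (E ∩ Metric.closedBall x₀ (r'/2)) := by rw [hcomp, add_zero]
    exact lt_of_lt_of_le (hx₀ _ (by positivity)) hball
  · by_contra hB
    push_neg at hB
    have hB0 : μ (E \ Metric.ball x₀ r') = 0 := le_antisymm hB (zero_le)
    have : (1:ℝ≥0∞) ≤ μ (E \ Metric.ball x₀ r') + μ (Metric.closedBall x₀ r') := by
      rw [← hμE]
      refine le_trans (measure_mono ?_) (measure_union_le _ _)
      intro y hy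
      by_cases h : y ∈ Metric.ball x₀ r'
      · exact Or.inr (Metric.ball_subset_closedBall h)
      · exact Or.inl ⟨hy, h⟩
    rw [hB0, zero_add] at this
    exact absurd (lt_of_lt_of_le hn this) (lt_irrefl _)


private lemma isOpen_isSigmaCompact {X : Type*} [MetricSpace X] [ProperSpace X] [Nonempty X]
    {U : Set X} (hU : IsOpen U) : IsSigmaCompact U := by
  rcases Set.eq_empty_or_nonempty Uᶜ with hc | hc
  · rw [Set.compl_empty_iff.mp hc]
    exact isSigmaCompact_univ
  · set x₀ := Classical.arbitrary X
    have heq : U = ⋃ n : ℕ,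
        (Metric.closedBall x₀ n ∩ {y | 1/(n+1 : ℝ) ≤ Metric.infDist y Uᶜ}) := by
      ext y
      simp only [Set.mem_iUnion, Set.mem_inter_iff, Metric.mem_closedBall, Set.mem_setOf_eq]
      constructor
      · intro hy
        have hpos : 0 < Metric.infDist y Uᶜ :=
          (hU.isClosed_compl.notMem_iff_infDist_pos hc).1 (by simp [hy])
        set M := max (dist y x₀) (1 / Metric.infDist y Uᶜ)
        refine ⟨⌈M⌉₊, le_trans (le_max_left _ _) (Nat.le_ceil M), ?_⟩
        have h1 : 1 / Metric.infDist y Uᶜ ≤ (⌈M⌉₊ : ℝ) + 1 :=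
          le_trans (le_trans (le_max_right _ _) (Nat.le_ceil M)) (by linarith)
        rw [div_le_iff₀ (by positivity)] at h1 ⊢
        · nlinarith [Metric.infDist_nonneg (s := Uᶜ) (x := y)]
      · rintro ⟨n, _, hn⟩
        by_contra hyU
        have : Metric.infDist y Uᶜ = 0 := Metric.infDist_zero_of_mem (by simpa using hyU)
        rw [this] at hn
        have : (0:ℝ) < 1/(n+1:ℝ) := by positivity
        linarith
    rw [heq]
    refine isSigmaCompact_iUnion_of_isCompact _ fun n => ?_
    refine (isCompact_closedBall x₀ n).inter_right ?_
    exact isClosed_le continuous_const (Metric.continuous_infDist_pt _)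

private lemma measurable_volume_skpinned {d k : ℕ} {A : Set (EuclideanSpace ℝ (Fin d))}
    (hA : IsCompact A) :
    Measurable fun x : EuclideanSpace ℝ (Fin d) => volume (SkPinned k x A) := by
  classical
  set F : (Fin (k+1) → EuclideanSpace ℝ (Fin d)) →
      (EuclideanSpace ℝ (Fin d)) × (Fin k → ℝ) :=
    fun p => (p 0, fun j => dist (p j.castSucc) (p j.succ)) with hFdef
  have hF : Continuous F := by
    refine Continuous.prodMk (continuous_apply 0) ?_
    exact continuous_pi fun j => Continuous.dist (continuous_apply _) (continuous_apply _)
  set U : Set (Fin (k+1) → EuclideanSpace ℝ (Fin d)) := {p | Function.Injective p} with hUdef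
  have hUopen : IsOpen U := by
    have hrw : U = ⋂ ij : Fin (k+1) × Fin (k+1),
        {p : Fin (k+1) → EuclideanSpace ℝ (Fin d) | ij.1 = ij.2 ∨ p ij.1 ≠ p ij.2} := by
      ext p
      simp only [hUdef, Set.mem_iInter, Set.mem_setOf_eq, Prod.forall]
      constructor
      · intro h i j
        by_cases hij : i = j
        · exact Or.inl hij
        · exact Or.inr fun he => hij (h he)
      · intro h i j he
        rcases h i j with h' | h'
        · exact h'
        · exact absurd he h'
    rw [hrw]
    refine isOpen_iInter_of_finite fun ij => ?_
    by_cases hij : ij.1 = ij.2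
    · have : {p : Fin (k+1) → EuclideanSpace ℝ (Fin d) | ij.1 = ij.2 ∨ p ij.1 ≠ p ij.2}
          = Set.univ := by ext p; simp [hij]
      rw [this]; exact isOpen_univ
    · have : {p : Fin (k+1) → EuclideanSpace ℝ (Fin d) | ij.1 = ij.2 ∨ p ij.1 ≠ p ij.2}
          = {p | p ij.1 = p ij.2}ᶜ := by ext p; simp [hij]
      rw [this]
      exact (isClosed_eq (continuous_apply ij.1) (continuous_apply ij.2)).isOpen_compl
  set C : Set (Fin (k+1) → EuclideanSpace ℝ (Fin d)) := {p | ∀ j : Fin k, p j.succ ∈ A}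
    with hCdef
  have hCclosed : IsClosed C := by
    have : C = ⋂ j : Fin k, (fun p : Fin (k+1) → EuclideanSpace ℝ (Fin d) => p j.succ) ⁻¹' A := by
      ext p; simp [hCdef]
    rw [this]
    exact isClosed_iInter fun j => hA.isClosed.preimage (continuous_apply (j.succ : Fin (k+1)))
  obtain ⟨Kn, hKc, hKU⟩ := isOpen_isSigmaCompact hUopen
  have hTm : MeasurableSet (F '' (C ∩ U)) := by
    have h1 : C ∩ U = ⋃ n, (Kn n ∩ C) := by
      rw [Set.inter_comm, ← hKU, Set.iUnion_inter]
    rw [h1, Set.image_iUnion]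
    exact MeasurableSet.iUnion fun n =>
      (((hKc n).inter_right hCclosed).image hF).measurableSet
  have hT : ∀ x, SkPinned k x A = Prod.mk x ⁻¹' (F '' (C ∩ U)) := by
    intro x
    ext v
    simp only [SkPinned, Set.mem_setOf_eq, Set.mem_preimage, Set.mem_image, Set.mem_inter_iff,
      hCdef, hUdef, hFdef, Prod.mk.injEq]
    constructor
    · rintro ⟨p, hp0, hpA, hpI, hpv⟩
      exact ⟨p, ⟨hpA, hpI⟩, hp0, by funext j; exact (hpv j).symm⟩
    · rintro ⟨p, ⟨hpA, hpI⟩, hp0, hpv⟩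
      exact ⟨p, hp0, hpA, hpI, fun j => by rw [← hpv]⟩
  simp_rw [hT]
  exact measurable_measure_prodMk_left hTm


private lemma pos_of_slices {k : ℕ} {S : Set (Fin (k+1) → ℝ)} {T : Set ℝ}
    (hT : 0 < volume T)
    (h : ∀ t ∈ T, 0 < volume {w : Fin k → ℝ | Fin.cons t w ∈ S}) :
    0 < volume S := by
  by_contra hS
  push_neg at hS
  have hS0 : volume S = 0 := le_antisymm hS (zero_le)
  set e := MeasurableEquiv.piFinSuccAbove (fun _ : Fin (k+1) => ℝ) 0 with hedef
  have mp : MeasurePreserving e (volume : Measure (Fin (k+1) → ℝ))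
      ((volume : Measure ℝ).prod (volume : Measure (Fin k → ℝ))) := by
    have h1 := measurePreserving_piFinSuccAbove (fun _ : Fin (k+1) => (volume : Measure ℝ)) 0
    simpa only [volume_pi] using h1
  set M := toMeasurable volume S with hMdef
  have hMmeas : MeasurableSet M := measurableSet_toMeasurable _ _
  have hM0 : volume M = 0 := by rw [hMdef, measure_toMeasurable]; exact hS0
  set B : Set (ℝ × (Fin k → ℝ)) := e.symm ⁻¹' M with hBdef
  have hBmeas : MeasurableSet B := e.symm.measurable hMmeas
  have hB0 : (volume : Measure ℝ).prod (volume : Measure (Fin k → ℝ)) B = 0 := by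
    rw [hBdef, (mp.symm e).measure_preimage hMmeas.nullMeasurableSet]
    exact hM0
  have hae := (Measure.measure_prod_null hBmeas).1 hB0
  have hN : volume {t : ℝ | volume (Prod.mk t ⁻¹' B) ≠ 0} = 0 := by
    have := hae
    rw [Filter.EventuallyEq, ae_iff] at this
    simpa using this
  obtain ⟨t, htT, htN⟩ : ∃ t ∈ T, volume (Prod.mk t ⁻¹' B) = 0 := by
    by_contra hcon
    push_neg at hcon
    have : T ⊆ {t : ℝ | volume (Prod.mk t ⁻¹' B) ≠ 0} := fun t ht => hcon t ht
    exact absurd (le_antisymm (le_trans (measure_mono this) hN.le) (zero_le)) hT.ne'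
  have hsub : {w : Fin k → ℝ | Fin.cons t w ∈ S} ⊆ Prod.mk t ⁻¹' B := by
    intro w hw
    have h1 : Fin.cons t w ∈ M := subset_toMeasurable _ _ hw
    have h2 : e (Fin.cons t w) = (t, w) := by
      rw [hedef]
      ext
      · simp [MeasurableEquiv.piFinSuccAbove_apply]
      · simp [MeasurableEquiv.piFinSuccAbove_apply, Fin.succAbove_zero]
    simp only [Set.mem_preimage, hBdef]
    rw [show ((t, w) : ℝ × (Fin k → ℝ)) = e (Fin.cons t w) from h2.symm]
    simpa using h1
  exact absurd (le_antisymm (le_trans (measure_mono hsub) htN.le) (zero_le)) (h t htT).ne'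


private lemma skpinned_mono {d k : ℕ} {x : EuclideanSpace ℝ (Fin d)}
    {A E : Set (EuclideanSpace ℝ (Fin d))} (hAE : A ⊆ E) :
    SkPinned k x A ⊆ SkPinned k x E := by
  rintro v ⟨p, h0, hA, hI, hv⟩
  exact ⟨p, h0, fun j => hAE (hA j), hI, hv⟩

private lemma chain_extend {d k : ℕ} {E A : Set (EuclideanSpace ℝ (Fin d))}
    {x y : EuclideanSpace ℝ (Fin d)} (hA : A ⊆ E) (hy : y ∈ E) (hx : x ∉ E)
    {t : ℝ} (ht : t = dist x y) :
    SkPinned k y A ⊆ {w : Fin k → ℝ | Fin.cons t w ∈ SkPinned (k+1) x E} := by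
  rintro w ⟨q, hq0, hqA, hqI, hqv⟩
  refine ⟨Fin.cons x q, Fin.cons_zero _ _, ?_, ?_, ?_⟩
  · intro j
    rw [Fin.cons_succ]
    refine Fin.cases ?_ ?_ j
    · rw [hq0]; exact hy
    · intro i; exact hA (hqA i)
  · rw [Fin.cons_injective_iff]
    refine ⟨?_, hqI⟩
    rintro ⟨i, hi⟩
    apply hx
    revert hi
    refine Fin.cases ?_ ?_ i
    · intro h; rw [hq0] at h; exact h ▸ hy
    · intro i h; rw [← h]; exact hA (hqA i)
  · intro j
    refine Fin.cases ?_ ?_ j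
    · rw [Fin.cons_zero, Fin.castSucc_zero, Fin.cons_zero]
      have : (0 : Fin (k+1)).succ = (1 : Fin (k+2)) := rfl
      rw [this]
      have h1 : (Fin.cons x q : Fin (k+2) → EuclideanSpace ℝ (Fin d)) 1 = q 0 := by
        have : (1 : Fin (k+2)) = (0 : Fin (k+1)).succ := rfl
        rw [this, Fin.cons_succ]
      rw [h1, hq0, ht]
    · intro i
      rw [Fin.cons_succ, ← Fin.succ_castSucc, Fin.cons_succ, Fin.cons_succ]
      exact hqv i

private lemma skpinned_one {d : ℕ} {E : Set (EuclideanSpace ℝ (Fin d))}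
    {x : EuclideanSpace ℝ (Fin d)} (hx : x ∉ E) :
    SkPinned 1 x E = (MeasurableEquiv.funUnique (Fin 1) ℝ) ⁻¹' (PDist x E) := by
  ext v
  have hvd : (MeasurableEquiv.funUnique (Fin 1) ℝ) v = v 0 := rfl
  simp only [Set.mem_preimage, hvd]
  constructor
  · rintro ⟨p, hp0, hpE, hpI, hpv⟩
    refine ⟨p (0 : Fin 1).succ, hpE 0, ?_⟩
    rw [hpv 0, Fin.castSucc_zero, hp0]
  · rintro ⟨y, hy, hvy⟩
    have hxy : x ≠ y := fun h => hx (h ▸ hy)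
    refine ⟨Fin.cons x (fun _ => y), Fin.cons_zero _ _, ?_, ?_, ?_⟩
    · intro j; rw [Fin.cons_succ]; exact hy
    · rw [Fin.cons_injective_iff]
      refine ⟨?_, Function.injective_of_subsingleton _⟩
      rintro ⟨i, hi⟩
      exact hxy hi.symm
    · intro j
      have hj : j = 0 := Subsingleton.elim j 0
      subst hj
      rw [Fin.castSucc_zero, Fin.cons_zero]
      have : (Fin.cons x (fun _ => y) : Fin 2 → EuclideanSpace ℝ (Fin d)) (0 : Fin 1).succ
          = y := by rw [Fin.cons_succ]
      rw [this]
      exact hvy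

private lemma skpinned_one_vol {d : ℕ} {E : Set (EuclideanSpace ℝ (Fin d))}
    (hE : IsCompact E) {x : EuclideanSpace ℝ (Fin d)} (hx : x ∉ E)
    (h : 0 < volume (PDist x E)) : 0 < volume (SkPinned 1 x E) := by
  have hP : MeasurableSet (PDist x E) := by
    have : PDist x E = (fun y => dist x y) '' E := by
      ext t; simp [PDist, eq_comm]
    rw [this]
    exact (hE.image (Continuous.dist continuous_const continuous_id)).measurableSet
  rw [skpinned_one hx]
  exact h.trans_eq ((volume_preserving_funUnique (Fin 1) ℝ).measure_preimage hP.nullMeasurableSet).symm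

private lemma exists_compact_pos {d : ℕ} {μ : Measure (EuclideanSpace ℝ (Fin d))}
    [IsFiniteMeasure μ] {G : Set (EuclideanSpace ℝ (Fin d))} (hG : MeasurableSet G)
    (h0 : 0 < μ G) : ∃ K, K ⊆ G ∧ IsCompact K ∧ 0 < μ K := by
  obtain ⟨K, hKG, hKc, hK⟩ := hG.exists_isCompact_lt_add (measure_ne_top μ G) h0.ne'
  refine ⟨K, hKG, hKc, ?_⟩
  by_contra h
  push_neg at h
  rw [le_antisymm h (zero_le), zero_add] at hK
  exact absurd hK (lt_irrefl _)

private lemma pos_of_smul_restrict {d : ℕ} {μ : Measure (EuclideanSpace ℝ (Fin d))}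
    {K S : Set (EuclideanSpace ℝ (Fin d))} (hK : MeasurableSet K) (hS : S ⊆ K)
    (h : 0 < ((μ K)⁻¹ • μ.restrict K) S) : 0 < μ S := by
  rw [Measure.smul_apply, smul_eq_mul, Measure.restrict_apply' hK,
    Set.inter_eq_self_of_subset_left hS] at h
  by_contra hc
  push_neg at hc
  rw [le_antisymm hc (zero_le), mul_zero] at h
  exact absurd h (lt_irrefl _)

private lemma chain_main (d : ℕ) (α : ℝ) (hα : 0 < α)
    (H : ∀ E₁ E₂ : Set (EuclideanSpace ℝ (Fin d)), IsCompact E₁ → IsCompact E₂ →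
      0 < μH[α] E₁ → 0 < μH[α] E₂ →
      ∀ μ₁ μ₂ : Measure (EuclideanSpace ℝ (Fin d)),
        Frostman α E₁ μ₁ → Frostman α E₂ μ₂ →
        0 < μ₂ {x ∈ E₂ | 0 < volume (PDist x E₁)}) :
    ∀ k : ℕ, 1 ≤ k →
    ∀ E₁ E₂ : Set (EuclideanSpace ℝ (Fin d)), IsCompact E₁ → IsCompact E₂ →
      0 < μH[α] E₁ → 0 < μH[α] E₂ → Disjoint E₁ E₂ →
      ∀ μ₁ μ₂ : Measure (EuclideanSpace ℝ (Fin d)),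
        Frostman α E₁ μ₁ → Frostman α E₂ μ₂ →
        0 < μ₂ {x ∈ E₂ | 0 < volume (SkPinned k x E₁)} := by
  intro k hk
  induction k, hk using Nat.le_induction with
  | base =>
    intro E₁ E₂ h1 h2 hH1 hH2 hdisj μ₁ μ₂ hμ₁ hμ₂
    have hX := H E₁ E₂ h1 h2 hH1 hH2 μ₁ μ₂ hμ₁ hμ₂
    refine lt_of_lt_of_le hX (measure_mono ?_)
    rintro x ⟨hxE, hxP⟩
    exact ⟨hxE, skpinned_one_vol h1 (fun hx => Set.disjoint_left.1 hdisj hx hxE) hxP⟩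
  | succ k hk IH =>
    intro E₁ E₂ h1 h2 hH1 hH2 hdisj μ₁ μ₂ hμ₁ hμ₂
    haveI := hμ₁.1
    obtain ⟨A, B, hAE, hBE, hAc, hBc, hABdisj, hA0, hB0⟩ := exists_split hα h1 hμ₁
    have hνA := frostman_restrict hμ₁ hAc.measurableSet hA0
    have hνB := frostman_restrict hμ₁ hBc.measurableSet hB0
    have hHA : 0 < μH[α] A := pos_hausdorff hα hμ₁ hA0
    have hHB : 0 < μH[α] B := pos_hausdorff hα hμ₁ hB0
    have hG := IH A B hAc hBc hHA hHB hABdisj _ _ hνA hνB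
    set G := {y ∈ B | 0 < volume (SkPinned k y A)} with hGdef
    have hGB : G ⊆ B := fun y hy => hy.1
    have hGmeas : MeasurableSet G := by
      have hrw : G = B ∩ ((fun y => volume (SkPinned k y A)) ⁻¹' Set.Ioi 0) := by
        ext y; simp [hGdef, Set.mem_setOf_eq, Set.mem_preimage, and_comm]
      rw [hrw]
      exact hBc.measurableSet.inter ((measurable_volume_skpinned hAc) measurableSet_Ioi)
    have hGpos : 0 < μ₁ G := pos_of_smul_restrict hBc.measurableSet hGB hG
    obtain ⟨K, hKG, hKc, hK0⟩ := exists_compact_pos hGmeas hGpos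
    have hHK : 0 < μH[α] K := pos_hausdorff hα hμ₁ hK0
    have hνK := frostman_restrict hμ₁ hKc.measurableSet hK0
    have hX := H K E₂ hKc h2 hHK hH2 _ μ₂ hνK hμ₂
    refine lt_of_lt_of_le hX (measure_mono ?_)
    rintro x ⟨hxE₂, hxP⟩
    refine ⟨hxE₂, ?_⟩
    have hxE₁ : x ∉ E₁ := fun hx => Set.disjoint_left.1 hdisj hx hxE₂
    refine pos_of_slices (T := PDist x K) hxP ?_
    rintro t ⟨y, hyK, hty⟩
    have hyG := hKG hyK
    refine lt_of_lt_of_le hyG.2 (measure_mono ?_)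
    exact chain_extend hAE (hBE hyG.1) hxE₁ hty

/-- Structure theorem for Lebesgue measure: if for all pairs of compact sets of positive
`α`-dimensional Hausdorff measure with Frostman measures, a positive measure of pins `x`
have `|Δ_x(E₁)|₁ > 0`, then for every `k ≥ 1` a positive measure of pins `x` have
`|S^k_x(E₁)|_k > 0`. -/
theorem stmt_17 (d : ℕ) (hd : 2 ≤ d) (α : ℝ) (hα : 0 < α)
    (H : ∀ E₁ E₂ : Set (EuclideanSpace ℝ (Fin d)), IsCompact E₁ → IsCompact E₂ →
      0 < μH[α] E₁ → 0 < μH[α] E₂ →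
      ∀ μ₁ μ₂ : Measure (EuclideanSpace ℝ (Fin d)),
        Frostman α E₁ μ₁ → Frostman α E₂ μ₂ →
        0 < μ₂ {x ∈ E₂ | 0 < volume (PDist x E₁)}) :
    ∀ k : ℕ, 1 ≤ k →
    ∀ E₁ E₂ : Set (EuclideanSpace ℝ (Fin d)), IsCompact E₁ → IsCompact E₂ →
      0 < μH[α] E₁ → 0 < μH[α] E₂ →
      ∀ μ₁ μ₂ : Measure (EuclideanSpace ℝ (Fin d)),
        Frostman α E₁ μ₁ → Frostman α E₂ μ₂ →
        0 < μ₂ {x ∈ E₂ | 0 < volume (SkPinned k x E₁)} := by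
  intro k hk E₁ E₂ h1 h2 hH1 hH2 μ₁ μ₂ hμ₁ hμ₂
  haveI := hμ₁.1
  haveI := hμ₂.1
  obtain ⟨A, B, hAE, hBE, hAc, hBc, hABdisj, hA0, hB0⟩ := exists_split hα h1 hμ₁
  have key : ∀ C : Set (EuclideanSpace ℝ (Fin d)), C ⊆ E₁ → IsCompact C → 0 < μ₁ C →
      0 < μ₂ (E₂ \ C) → 0 < μ₂ {x ∈ E₂ | 0 < volume (SkPinned k x E₁)} := by
    intro C hCE hCc hC0 hE₂C
    obtain ⟨K₂, hK₂sub, hK₂c, hK₂0⟩ :=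
      exists_compact_pos (h2.measurableSet.diff hCc.measurableSet) hE₂C
    have hHC : 0 < μH[α] C := pos_hausdorff hα hμ₁ hC0
    have hHK₂ : 0 < μH[α] K₂ := pos_hausdorff hα hμ₂ hK₂0
    have hνC := frostman_restrict hμ₁ hCc.measurableSet hC0
    have hνK₂ := frostman_restrict hμ₂ hK₂c.measurableSet hK₂0
    have hdisj : Disjoint C K₂ := by
      refine Set.disjoint_left.2 fun z hzC hzK => ?_
      exact (hK₂sub hzK).2 hzC
    have hres := chain_main d α hα H k hk C K₂ hCc hK₂c hHC hHK₂ hdisj _ _ hνC hνK₂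
    have hpos : 0 < μ₂ {x ∈ K₂ | 0 < volume (SkPinned k x C)} :=
      pos_of_smul_restrict hK₂c.measurableSet (fun x hx => hx.1) hres
    refine lt_of_lt_of_le hpos (measure_mono ?_)
    rintro x ⟨hxK₂, hxv⟩
    exact ⟨(hK₂sub hxK₂).1, lt_of_lt_of_le hxv (measure_mono (skpinned_mono hCE))⟩
  have hsplit : 0 < μ₂ (E₂ \ A) ∨ 0 < μ₂ (E₂ \ B) := by
    by_contra h
    push_neg at h
    have ha : μ₂ (E₂ \ A) = 0 := le_antisymm h.1 (zero_le)
    have hb : μ₂ (E₂ \ B) = 0 := le_antisymm h.2 (zero_le)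
    have h1' : (1:ℝ≥0∞) ≤ μ₂ E₂ + μ₂ E₂ᶜ := by
      rw [← measure_univ (μ := μ₂)]
      exact le_trans (measure_mono (by simp)) (measure_union_le E₂ E₂ᶜ)
    rw [hμ₂.2.1, add_zero] at h1'
    have hsub : E₂ ⊆ (E₂ \ A) ∪ (E₂ \ B) := by
      intro x hx
      by_cases hA : x ∈ A
      · exact Or.inr ⟨hx, fun hB => Set.disjoint_left.1 hABdisj hA hB⟩
      · exact Or.inl ⟨hx, hA⟩
    have : (1:ℝ≥0∞) ≤ 0 := by
      calc (1:ℝ≥0∞) ≤ μ₂ E₂ := h1'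
        _ ≤ μ₂ (E₂ \ A) + μ₂ (E₂ \ B) :=
            le_trans (measure_mono hsub) (measure_union_le _ _)
        _ = 0 := by rw [ha, hb, add_zero]
    simp at this
  rcases hsplit with hcase | hcase
  · exact key A hAE hAc hA0 hcase
  · exact key B hBE hBc hB0 hcase
end
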